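/- arXiv:2006.16180 — 6 statements merged into one kernel-verified Lean document; each statement's English description precedes it below -/
import Mathlib

section
/- Let η = Σ_{k=1}^d (ξ_k - p) x_k with ξ_k i.i.d. Bernoulli(p), 0 < p ≤ 1/2. Then Var(η²) = p(1-p)(1-6p+6p²)‖x‖₄⁴ + 2p²(1-p)²‖x‖⁴. -/
open MeasureTheory ProbabilityTheory Finset

/-- Variance of `η²` where `η = ∑ k, (ξ k - p) x k` for i.i.d. Bernoulli(p) `ξ`. -/
theorem bernoulli_variance_of_eta_sq
    {Ω : Type*} [MeasurableSpace Ω] (μ : Measure Ω) [IsProbabilityMeasure μ]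
    {d : ℕ} (p : ℝ) (hp : 0 < p) (hp' : p ≤ 1 / 2)
    (ξ : Fin d → Ω → ℝ) (hmeas : ∀ k, Measurable (ξ k))
    (hval : ∀ k ω, ξ k ω = 0 ∨ ξ k ω = 1)
    (hdist : ∀ k, μ {ω | ξ k ω = 1} = ENNReal.ofReal p)
    (hind : iIndepFun ξ μ)
    (x : Fin d → ℝ) :
    variance (fun ω => (∑ k, (ξ k ω - p) * x k) ^ 2) μ
      = p * (1 - p) * (1 - 6 * p + 6 * p ^ 2) * (∑ k, (x k) ^ 4)
        + 2 * p ^ 2 * (1 - p) ^ 2 * (∑ k, (x k) ^ 2) ^ 2 := by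
  have hp1 : p ≤ 1 := hp'.trans (by norm_num)
  -- the centered summands
  set Y : Fin d → Ω → ℝ := fun k ω => (ξ k ω - p) * x k with hYdef
  have hYmeas : ∀ k, Measurable (Y k) := fun k =>
    ((hmeas k).sub measurable_const).mul_const _
  have hYind : iIndepFun Y μ :=
    hind.comp (fun k t => (t - p) * x k)
      (fun k => (measurable_id.sub measurable_const).mul_const _)
  -- integrability of bounded measurable functions
  have hint : ∀ (f : Ω → ℝ), Measurable f → ∀ C : ℝ, (∀ ω, |f ω| ≤ C) → Integrable f μ :=
    fun f hf C h =>
      (integrable_const C).mono' hf.aestronglyMeasurable (Filter.Eventually.of_forall h)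
  -- bound on Y
  have hYbdd : ∀ k ω, |Y k ω| ≤ |x k| := by
    intro k ω
    have h1 : |ξ k ω - p| ≤ 1 := by
      have h0 : 0 ≤ ξ k ω := by rcases hval k ω with h | h <;> rw [h] <;> norm_num
      have h1' : ξ k ω ≤ 1 := by rcases hval k ω with h | h <;> rw [h] <;> norm_num
      exact abs_le.mpr ⟨by nlinarith, by nlinarith⟩
    calc |Y k ω| = |ξ k ω - p| * |x k| := abs_mul _ _
      _ ≤ 1 * |x k| := mul_le_mul_of_nonneg_right h1 (abs_nonneg _)
      _ = |x k| := one_mul _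
  -- moments of single Y
  have hYmom : ∀ k (n : ℕ), ∫ ω, (Y k ω)^n ∂μ = (p*(1-p)^n + (1-p)*(-p)^n) * (x k)^n := by
    intro k n
    have hA : MeasurableSet {ω | ξ k ω = 1} := (hmeas k) (measurableSet_singleton 1)
    have hpt : (fun ω => (Y k ω)^n)
        = fun ω => (((1-p)^n - (-p)^n) * Set.indicator {ω | ξ k ω = 1} (fun _ => (1:ℝ)) ω
            + (-p)^n) * (x k)^n := by
      funext ω
      rcases hval k ω with h | h
      · have hm : ω ∉ {ω | ξ k ω = 1} := by simp [h]
        simp only [hYdef, h, Set.indicator_of_notMem hm, mul_zero, add_zero, zero_sub,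
          zero_mul]
        rw [show -p * x k = (-p) * x k from rfl, mul_pow]; ring
      · have hm : ω ∈ {ω | ξ k ω = 1} := by simp [h]
        simp only [hYdef, h, Set.indicator_of_mem hm, mul_one]
        rw [show (1 - p) * x k = (1-p) * x k from rfl, mul_pow]; ring
    have hindic : Integrable (Set.indicator {ω | ξ k ω = 1} (fun _ => (1:ℝ))) μ :=
      (integrable_const (1:ℝ)).indicator hA
    rw [hpt]
    simp only [add_mul]
    rw [integral_add (((hindic.const_mul _)).mul_const _) (integrable_const _),
      integral_const]
    rw [show (fun a => ((1-p)^n - (-p)^n) * Set.indicator {ω | ξ k ω = 1} (fun _ => (1:ℝ)) a * (x k)^n)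
        = fun a => (((1-p)^n - (-p)^n) * (x k)^n) * Set.indicator {ω | ξ k ω = 1} (fun _ => (1:ℝ)) a
        from funext fun a => by ring]
    rw [integral_const_mul, integral_indicator_const _ hA, measureReal_def, hdist k]
    simp [ENNReal.toReal_ofReal hp.le]
    ring
  -- partial sums
  set S : Finset (Fin d) → Ω → ℝ := fun s ω => ∑ k ∈ s, Y k ω with hSdef
  have hSmeas : ∀ s, Measurable (S s) := fun s => Finset.measurable_sum s fun k _ => hYmeas k
  have hSbdd : ∀ s ω, |S s ω| ≤ ∑ k ∈ s, |x k| := fun s ω =>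
    (Finset.abs_sum_le_sum_abs _ _).trans (Finset.sum_le_sum fun k _ => hYbdd k ω)
  -- integrability of monomials
  have hintYS : ∀ (a : Fin d) (s : Finset (Fin d)) (i j : ℕ),
      Integrable (fun ω => (Y a ω)^i * (S s ω)^j) μ := by
    intro a s i j
    refine hint _ (((hYmeas a).pow_const i).mul ((hSmeas s).pow_const j))
      (|x a|^i * (∑ k ∈ s, |x k|)^j) fun ω => ?_
    rw [abs_mul, abs_pow, abs_pow]
    have h1 : |Y a ω| ^ i ≤ |x a| ^ i := pow_le_pow_left₀ (abs_nonneg _) (hYbdd a ω) i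
    have h2 : |S s ω| ^ j ≤ (∑ k ∈ s, |x k|) ^ j := pow_le_pow_left₀ (abs_nonneg _) (hSbdd s ω) j
    exact mul_le_mul h1 h2 (pow_nonneg (abs_nonneg _) _) (pow_nonneg (abs_nonneg _) _)
  have hintS : ∀ (s : Finset (Fin d)) (j : ℕ), Integrable (fun ω => (S s ω)^j) μ := by
    intro s j
    refine hint _ ((hSmeas s).pow_const j) ((∑ k ∈ s, |x k|)^j) fun ω => ?_
    rw [abs_pow]; exact pow_le_pow_left₀ (abs_nonneg _) (hSbdd s ω) j
  -- independence product formula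
  have hprod : ∀ (a : Fin d) (s : Finset (Fin d)), a ∉ s → ∀ i j : ℕ,
      ∫ ω, (Y a ω)^i * (S s ω)^j ∂μ = (∫ ω, (Y a ω)^i ∂μ) * (∫ ω, (S s ω)^j ∂μ) := by
    intro a s ha i j
    have hI : IndepFun (Y a) (S s) μ := by
      have := (hYind.indepFun_finset_sum_of_notMem hYmeas ha).symm
      have he : S s = (∑ j ∈ s, Y j) := by funext ω; simp [hSdef]
      rw [he]; exact this
    have hIc : IndepFun (fun ω => (Y a ω)^i) (fun ω => (S s ω)^j) μ :=
      hI.comp (measurable_id.pow_const i) (measurable_id.pow_const j)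
    exact hIc.integral_fun_mul_eq_mul_integral
      (hint _ ((hYmeas a).pow_const i) (|x a|^i)
        (fun ω => by rw [abs_pow]; exact pow_le_pow_left₀ (abs_nonneg _) (hYbdd a ω) i)).aestronglyMeasurable
      (hintS s j).aestronglyMeasurable
  -- the three moment formulas by induction
  have key : ∀ s : Finset (Fin d),
      (∫ ω, S s ω ∂μ = 0) ∧
      (∫ ω, (S s ω)^2 ∂μ = ∑ k ∈ s, p*(1-p)*(x k)^2) ∧
      (∫ ω, (S s ω)^4 ∂μ = ∑ k ∈ s, (p*(1-p)^4 + (1-p)*p^4) * (x k)^4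
        + 3*((∑ k ∈ s, p*(1-p)*(x k)^2)^2 - ∑ k ∈ s, (p*(1-p)*(x k)^2)^2)) := by
    intro s
    induction s using Finset.induction_on with
    | empty => simp [hSdef]
    | @insert a s ha ih =>
      obtain ⟨ih1, ih2, ih4⟩ := ih
      have hS1 : ∀ ω, S (insert a s) ω = Y a ω + S s ω := fun ω => Finset.sum_insert ha
      have hm1 : ∫ ω, (Y a ω)^1 ∂μ = 0 := by rw [hYmom]; ring_nf
      have hm2 : ∫ ω, (Y a ω)^2 ∂μ = p*(1-p)*(x a)^2 := by rw [hYmom]; ring_nf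
      have hintY : ∀ i : ℕ, Integrable (fun ω => (Y a ω)^i) μ := fun i =>
        hint _ ((hYmeas a).pow_const i) (|x a|^i)
          (fun ω => by rw [abs_pow]; exact pow_le_pow_left₀ (abs_nonneg _) (hYbdd a ω) i)
      refine ⟨?_, ?_, ?_⟩
      · have : (fun ω => S (insert a s) ω) = fun ω => (Y a ω)^1 + S s ω := by
          funext ω; rw [hS1]; ring
        rw [this, integral_add (hintY 1) (by simpa using hintS s 1), hm1, ih1, add_zero]
      · have : (fun ω => (S (insert a s) ω)^2)
            = fun ω => ((Y a ω)^2 + 2*((Y a ω)^1 * (S s ω)^1)) + (S s ω)^2 := by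
          funext ω; rw [hS1]; ring
        have iA : Integrable (fun ω => (Y a ω)^2 + 2*((Y a ω)^1 * (S s ω)^1)) μ :=
          (hintY 2).add ((hintYS a s 1 1).const_mul 2)
        rw [this, integral_add iA (hintS s 2),
          integral_add (hintY 2) ((hintYS a s 1 1).const_mul 2), integral_const_mul,
          hprod a s ha 1 1, hm1, ih2, Finset.sum_insert ha, hm2]
        have : ∫ ω, (S s ω)^1 ∂μ = 0 := by simpa using ih1
        rw [this]; ring
      · have : (fun ω => (S (insert a s) ω)^4)
            = fun ω => ((((Y a ω)^4 + 4*((Y a ω)^3 * (S s ω)^1)) + 6*((Y a ω)^2 * (S s ω)^2))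
                + 4*((Y a ω)^1 * (S s ω)^3)) + (S s ω)^4 := by
          funext ω; rw [hS1]; ring
        have i1 : Integrable (fun ω => (Y a ω)^4 + 4*((Y a ω)^3 * (S s ω)^1)) μ :=
          (hintY 4).add ((hintYS a s 3 1).const_mul 4)
        have i2 : Integrable (fun ω => ((Y a ω)^4 + 4*((Y a ω)^3 * (S s ω)^1))
            + 6*((Y a ω)^2 * (S s ω)^2)) μ := i1.add ((hintYS a s 2 2).const_mul 6)
        have i3 : Integrable (fun ω => (((Y a ω)^4 + 4*((Y a ω)^3 * (S s ω)^1))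
            + 6*((Y a ω)^2 * (S s ω)^2)) + 4*((Y a ω)^1 * (S s ω)^3)) μ :=
          i2.add ((hintYS a s 1 3).const_mul 4)
        rw [this, integral_add i3 (hintS s 4), integral_add i2 ((hintYS a s 1 3).const_mul 4),
          integral_add i1 ((hintYS a s 2 2).const_mul 6),
          integral_add (hintY 4) ((hintYS a s 3 1).const_mul 4),
          integral_const_mul, integral_const_mul, integral_const_mul,
          hprod a s ha 3 1, hprod a s ha 2 2, hprod a s ha 1 3,
          hm1, hm2, hYmom a 4, ih2, ih4]
        have hS1' : ∫ ω, (S s ω)^1 ∂μ = 0 := by simpa using ih1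
        rw [hS1']
        rw [Finset.sum_insert ha, Finset.sum_insert ha, Finset.sum_insert ha]
        ring
  -- conclude
  obtain ⟨k1, k2, k4⟩ := key Finset.univ
  have hXeq : (fun ω => (∑ k, (ξ k ω - p) * x k) ^ 2) = fun ω => (S Finset.univ ω)^2 := by
    funext ω; simp [hSdef, hYdef]
  rw [hXeq]
  have hmem : MemLp (fun ω => (S Finset.univ ω)^2) 2 μ := by
    refine MemLp.of_bound ((hSmeas Finset.univ).pow_const 2).aestronglyMeasurable
      ((∑ k, |x k|)^2) (Filter.Eventually.of_forall fun ω => ?_)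
    rw [Real.norm_eq_abs, abs_pow]
    exact pow_le_pow_left₀ (abs_nonneg _) (hSbdd Finset.univ ω) 2
  rw [variance_eq_sub hmem]
  have hsq : (fun ω => (S Finset.univ ω)^2)^2 = fun ω => (S Finset.univ ω)^4 := by
    funext ω; simp [Pi.pow_apply]; ring
  rw [show μ[(fun ω => (S Finset.univ ω)^2)^2] = ∫ ω, (S Finset.univ ω)^4 ∂μ by rw [hsq]]
  rw [k4, k2]
  have e1 : ∑ k, (p*(1-p)*(x k)^2)^2 = p^2*(1-p)^2 * ∑ k, (x k)^4 := by
    rw [Finset.mul_sum]; congr 1; funext k; ring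
  have e2 : ∑ k, p*(1-p)*(x k)^2 = p*(1-p) * ∑ k, (x k)^2 := by
    rw [Finset.mul_sum]
  have e3 : ∑ k, (p*(1-p)^4 + (1-p)*p^4) * (x k)^4
      = (p*(1-p)^4 + (1-p)*p^4) * ∑ k, (x k)^4 := by
    rw [Finset.mul_sum]
  rw [e1, e2, e3]
  ring
end

section
/- Let η = Σ_{k=1}^d (ξ_k - p) x_k with ξ_k i.i.d. Bernoulli(p) and 0 < p ≤ 1/2, and let ζ = η². Then E[ζ²] < 2(1-p)³ ‖x‖⁴ (assuming x ≠ 0). -/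
open MeasureTheory ProbabilityTheory Finset


noncomputable def bw (p : ℝ) (b : Bool) : ℝ := if b then p else 1 - p
noncomputable def bv (b : Bool) : ℝ := if b then 1 else 0

lemma pi_succ_sum {d : ℕ} (f : (Fin (d+1) → Bool) → ℝ) :
    ∑ s : Fin (d+1) → Bool, f s = ∑ b : Bool, ∑ t : Fin d → Bool, f (Fin.cons b t) := by
  rw [← (Equiv.sum_comp (Fin.consEquiv (fun _ => Bool)) f), Fintype.sum_prod_type]
  rfl

lemma cube_moments (p : ℝ) (d : ℕ) (x : Fin d → ℝ) :
    (∑ s : Fin d → Bool, ∏ k, bw p (s k)) = 1 ∧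
    (∑ s : Fin d → Bool, (∏ k, bw p (s k)) * (∑ k, (bv (s k) - p) * x k)) = 0 ∧
    (∑ s : Fin d → Bool, (∏ k, bw p (s k)) * (∑ k, (bv (s k) - p) * x k) ^ 2)
        = p * (1 - p) * ∑ k, x k ^ 2 ∧
    (∑ s : Fin d → Bool, (∏ k, bw p (s k)) * (∑ k, (bv (s k) - p) * x k) ^ 3)
        = p * (1 - p) * (1 - 2 * p) * ∑ k, x k ^ 3 ∧
    (∑ s : Fin d → Bool, (∏ k, bw p (s k)) * (∑ k, (bv (s k) - p) * x k) ^ 4)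
        = p * (1 - p) * (1 - 6 * p + 6 * p ^ 2) * (∑ k, x k ^ 4)
          + 3 * (p * (1 - p)) ^ 2 * (∑ k, x k ^ 2) ^ 2 := by
  induction d with
  | zero =>
      simp [bw]
  | succ d ih =>
      obtain ⟨h0, h1, h2, h3, h4⟩ := ih (fun k => x k.succ)
      have hW : ∀ (b : Bool) (t : Fin d → Bool),
          (∏ k, bw p ((Fin.cons b t : Fin (d+1) → Bool) k)) = bw p b * ∏ k, bw p (t k) := by
        intro b t
        rw [Fin.prod_univ_succ]
        simp
      have hT : ∀ (b : Bool) (t : Fin d → Bool),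
          (∑ k, (bv ((Fin.cons b t : Fin (d+1) → Bool) k) - p) * x k)
            = (bv b - p) * x 0 + ∑ k, (bv (t k) - p) * x k.succ := by
        intro b t
        rw [Fin.sum_univ_succ]
        simp
      refine ⟨?_, ?_, ?_, ?_, ?_⟩
      · rw [pi_succ_sum]
        simp only [hW]
        rw [Fintype.sum_bool]
        simp only [← Finset.mul_sum, h0]
        simp [bw]
      · rw [pi_succ_sum]
        simp only [hW, hT]
        have expand : ∀ (b : Bool) (t : Fin d → Bool),
            (bw p b * ∏ k, bw p (t k)) *
              ((bv b - p) * x 0 + ∑ k, (bv (t k) - p) * x k.succ)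
            = bw p b * ((bv b - p) * x 0) * (∏ k, bw p (t k))
              + bw p b * ((∏ k, bw p (t k)) * (∑ k, (bv (t k) - p) * x k.succ)) := by
          intro b t; ring
        simp only [expand, Finset.sum_add_distrib, ← Finset.mul_sum, h0, h1]
        rw [Fintype.sum_bool]
        simp [bw, bv]; ring
      · rw [pi_succ_sum]
        simp only [hW, hT]
        have expand : ∀ (b : Bool) (t : Fin d → Bool),
            (bw p b * ∏ k, bw p (t k)) *
              ((bv b - p) * x 0 + ∑ k, (bv (t k) - p) * x k.succ) ^ 2
            = bw p b * ((bv b - p) * x 0) ^ 2 * (∏ k, bw p (t k))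
              + bw p b * 2 * ((bv b - p) * x 0) * ((∏ k, bw p (t k)) * (∑ k, (bv (t k) - p) * x k.succ))
              + bw p b * ((∏ k, bw p (t k)) * (∑ k, (bv (t k) - p) * x k.succ) ^ 2) := by
          intro b t; ring
        simp only [expand, Finset.sum_add_distrib, ← Finset.mul_sum, h0, h1, h2]
        simp [Fintype.sum_bool, bw, bv, Fin.sum_univ_succ]
        ring
      · rw [pi_succ_sum]
        simp only [hW, hT]
        have expand : ∀ (b : Bool) (t : Fin d → Bool),
            (bw p b * ∏ k, bw p (t k)) *
              ((bv b - p) * x 0 + ∑ k, (bv (t k) - p) * x k.succ) ^ 3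
            = bw p b * ((bv b - p) * x 0) ^ 3 * (∏ k, bw p (t k))
              + bw p b * 3 * ((bv b - p) * x 0) ^ 2 * ((∏ k, bw p (t k)) * (∑ k, (bv (t k) - p) * x k.succ))
              + bw p b * 3 * ((bv b - p) * x 0) * ((∏ k, bw p (t k)) * (∑ k, (bv (t k) - p) * x k.succ) ^ 2)
              + bw p b * ((∏ k, bw p (t k)) * (∑ k, (bv (t k) - p) * x k.succ) ^ 3) := by
          intro b t; ring
        simp only [expand, Finset.sum_add_distrib, ← Finset.mul_sum, h0, h1, h2, h3]
        simp [Fintype.sum_bool, bw, bv, Fin.sum_univ_succ]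
        ring
      · rw [pi_succ_sum]
        simp only [hW, hT]
        have expand : ∀ (b : Bool) (t : Fin d → Bool),
            (bw p b * ∏ k, bw p (t k)) *
              ((bv b - p) * x 0 + ∑ k, (bv (t k) - p) * x k.succ) ^ 4
            = bw p b * ((bv b - p) * x 0) ^ 4 * (∏ k, bw p (t k))
              + bw p b * 4 * ((bv b - p) * x 0) ^ 3 * ((∏ k, bw p (t k)) * (∑ k, (bv (t k) - p) * x k.succ))
              + bw p b * 6 * ((bv b - p) * x 0) ^ 2 * ((∏ k, bw p (t k)) * (∑ k, (bv (t k) - p) * x k.succ) ^ 2)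
              + bw p b * 4 * ((bv b - p) * x 0) * ((∏ k, bw p (t k)) * (∑ k, (bv (t k) - p) * x k.succ) ^ 3)
              + bw p b * ((∏ k, bw p (t k)) * (∑ k, (bv (t k) - p) * x k.succ) ^ 4) := by
          intro b t; ring
        simp only [expand, Finset.sum_add_distrib, ← Finset.mul_sum, h0, h1, h2, h3, h4]
        simp [Fintype.sum_bool, bw, bv, Fin.sum_univ_succ]
        ring



/-- `E[ζ²] = E[η⁴] < 2(1-p)³‖x‖⁴` where `η = ∑ k, (ξ k - p) x k`,
`ζ = η²`, `ξ` i.i.d. Bernoulli(p), `0 < p ≤ 1/2`, `x ≠ 0`. -/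
theorem bernoulli_zeta_second_moment_bound
    {Ω : Type*} [MeasurableSpace Ω] (μ : Measure Ω) [IsProbabilityMeasure μ]
    {d : ℕ} (p : ℝ) (hp : 0 < p) (hp' : p ≤ 1 / 2)
    (ξ : Fin d → Ω → ℝ) (hmeas : ∀ k, Measurable (ξ k))
    (hval : ∀ k ω, ξ k ω = 0 ∨ ξ k ω = 1)
    (hdist : ∀ k, μ {ω | ξ k ω = 1} = ENNReal.ofReal p)
    (hind : iIndepFun ξ μ)
    (x : Fin d → ℝ) (hx : x ≠ 0) :
    ∫ ω, ((∑ k, (ξ k ω - p) * x k) ^ 2) ^ 2 ∂μ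
      < 2 * (1 - p) ^ 3 * (∑ k, (x k) ^ 2) ^ 2 := by
  classical
  have hp1 : p ≤ 1 := by linarith
  -- the events
  set A : (Fin d → Bool) → Set Ω := fun s => ⋂ k, ξ k ⁻¹' {bv (s k)} with hA
  have hAmeas : ∀ s, MeasurableSet (A s) := fun s =>
    MeasurableSet.iInter fun k => (hmeas k) (measurableSet_singleton _)
  -- measure of each event
  have hpre1 : ∀ k, μ (ξ k ⁻¹' {(1:ℝ)}) = ENNReal.ofReal p := by
    intro k; exact hdist k
  have hpre0 : ∀ k, μ (ξ k ⁻¹' {(0:ℝ)}) = ENNReal.ofReal (1 - p) := by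
    intro k
    have hc : ξ k ⁻¹' {(0:ℝ)} = (ξ k ⁻¹' {(1:ℝ)})ᶜ := by
      ext ω
      simp only [Set.mem_preimage, Set.mem_singleton_iff, Set.mem_compl_iff]
      constructor
      · intro h h1; rw [h] at h1; norm_num at h1
      · intro h; rcases hval k ω with h0 | h1
        · exact h0
        · exact absurd h1 h
    rw [hc, measure_compl ((hmeas k) (measurableSet_singleton _)) (measure_ne_top μ _),
      measure_univ, hpre1 k, ← ENNReal.ofReal_one, ← ENNReal.ofReal_sub _ hp.le]
  have hμA : ∀ s, μ (A s) = ENNReal.ofReal (∏ k, bw p (s k)) := by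
    intro s
    have h1 : A s = ⋂ k ∈ Finset.univ, ξ k ⁻¹' {bv (s k)} := by simp [hA]
    rw [h1, hind.measure_inter_preimage_eq_mul Finset.univ
      (sets := fun k => {bv (s k)}) (fun k _ => measurableSet_singleton _)]
    rw [ENNReal.ofReal_prod_of_nonneg
      (fun k _ => by cases s k <;> simp [bw] <;> linarith)]
    apply Finset.prod_congr rfl
    intro k _
    cases hsk : s k <;> simp [bv, bw, hpre0 k, hpre1 k]
  -- pointwise decomposition
  have key : ∀ ω, (∑ k, (ξ k ω - p) * x k) ^ 4
      = ∑ s : Fin d → Bool,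
          Set.indicator (A s) (fun _ => (∑ k, (bv (s k) - p) * x k) ^ 4) ω := by
    intro ω
    set s0 : Fin d → Bool := fun k => decide (ξ k ω = 1) with hs0
    have hvs0 : ∀ k, bv (s0 k) = ξ k ω := by
      intro k
      rcases hval k ω with h0 | h1
      · simp [hs0, bv, h0]
      · simp [hs0, bv, h1]
    rw [Finset.sum_eq_single s0]
    · have hmem : ω ∈ A s0 := Set.mem_iInter.2 fun k => by
        simp [Set.mem_preimage, hvs0 k]
      rw [Set.indicator_of_mem hmem]
      congr 1
      exact Finset.sum_congr rfl fun k _ => by rw [hvs0 k]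
    · intro s _ hs
      apply Set.indicator_of_notMem
      intro hmem
      apply hs
      funext k
      have := Set.mem_iInter.1 hmem k
      simp only [Set.mem_preimage, Set.mem_singleton_iff] at this
      rcases hval k ω with h0 | h1
      · have : bv (s k) = 0 := this.symm.trans h0
        have h2 : s k = false := by
          cases hsk : s k
          · rfl
          · rw [hsk] at this; simp [bv] at this
        rw [h2]; simp [hs0, h0]
      · have : bv (s k) = 1 := this.symm.trans h1
        have h2 : s k = true := by
          cases hsk : s k
          · rw [hsk] at this; simp [bv] at this
          · rfl
        rw [h2]; simp [hs0, h1]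
    · intro h
      exact absurd (Finset.mem_univ s0) h
  -- compute the integral
  have hint : ∫ ω, ((∑ k, (ξ k ω - p) * x k) ^ 2) ^ 2 ∂μ
      = ∑ s : Fin d → Bool, (∏ k, bw p (s k)) * (∑ k, (bv (s k) - p) * x k) ^ 4 := by
    have h1 : (fun ω => ((∑ k, (ξ k ω - p) * x k) ^ 2) ^ 2)
        = fun ω => ∑ s : Fin d → Bool,
            Set.indicator (A s) (fun _ => (∑ k, (bv (s k) - p) * x k) ^ 4) ω := by
      funext ω
      rw [← pow_mul]
      exact key ω
    rw [h1, integral_finset_sum]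
    · apply Finset.sum_congr rfl
      intro s _
      rw [integral_indicator_const _ (hAmeas s), measureReal_def, hμA s, smul_eq_mul,
        ENNReal.toReal_ofReal]
      exact Finset.prod_nonneg fun k _ => by cases s k <;> simp [bw] <;> linarith
    · intro s _
      exact (integrable_const _).indicator (hAmeas s)
  rw [hint, (cube_moments p d x).2.2.2.2]
  -- the final inequality
  have hS4pos : 0 < ∑ k, x k ^ 4 := by
    obtain ⟨k, hk⟩ : ∃ k, x k ≠ 0 := by
      by_contra h
      push_neg at h
      exact hx (funext h)
    exact Finset.sum_pos' (fun i _ => by positivity) ⟨k, Finset.mem_univ k, by positivity⟩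
  have hS42 : (∑ k, x k ^ 4) ≤ (∑ k, x k ^ 2) ^ 2 := by
    have := Finset.sum_sq_le_sq_sum_of_nonneg (s := Finset.univ)
      (f := fun k => x k ^ 2) (fun i _ => sq_nonneg (x i))
    calc (∑ k, x k ^ 4) = ∑ k, (x k ^ 2) ^ 2 := by
          apply Finset.sum_congr rfl; intro k _; ring
      _ ≤ (∑ k, x k ^ 2) ^ 2 := this
  set S4 := ∑ k, x k ^ 4
  set S2 := (∑ k, x k ^ 2) ^ 2
  have hS2pos : 0 < S2 := lt_of_lt_of_le hS4pos hS42
  have h1p : (0:ℝ) < 1 - p := by linarith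
  rcases le_or_gt 0 (1 - 6 * p + 6 * p ^ 2) with hc | hc
  · have h1 : p * (1 - p) * (1 - 6 * p + 6 * p ^ 2) * S4
        ≤ p * (1 - p) * (1 - 6 * p + 6 * p ^ 2) * S2 :=
      mul_le_mul_of_nonneg_left hS42 (mul_nonneg (mul_nonneg hp.le h1p.le) hc)
    have h2 : p * (1 - p) * (1 - 6 * p + 6 * p ^ 2) + 3 * (p * (1 - p)) ^ 2
        < 2 * (1 - p) ^ 3 := by
      have e : 2 * (1 - p) ^ 3
          - (p * (1 - p) * (1 - 6 * p + 6 * p ^ 2) + 3 * (p * (1 - p)) ^ 2)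
          = (1 - p) * (2 - 3 * p) * (p ^ 2 - p + 1) := by ring
      nlinarith [mul_pos (mul_pos h1p (by linarith : (0:ℝ) < 2 - 3 * p))
        (by nlinarith [sq_nonneg (p - 1/2)] : (0:ℝ) < p ^ 2 - p + 1)]
    nlinarith [mul_lt_mul_of_pos_right h2 hS2pos]
  · have hneg : p * (1 - p) * (1 - 6 * p + 6 * p ^ 2) * S4 < 0 :=
      mul_neg_of_neg_of_pos (mul_neg_of_pos_of_neg (mul_pos hp h1p) hc) hS4pos
    have h3 : 3 * (p * (1 - p)) ^ 2 ≤ 2 * (1 - p) ^ 3 := by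
      nlinarith [mul_nonneg (sq_nonneg (1 - p))
        (by nlinarith : (0:ℝ) ≤ 2 - 2 * p - 3 * p ^ 2)]
    nlinarith [mul_le_mul_of_nonneg_right h3 hS2pos.le]
end

section
/- For all real a with 0 < a ≤ 4, the inequality a²/4 < (1+a)log(1+a) - a holds. -/
open Real Set

private noncomputable def gAux : ℝ → ℝ := fun a => Real.log (1 + a) - (a + a ^ 2 / 4) / (1 + a)

private lemma gAux_hasDerivAt {x : ℝ} (hx : -1 < x) :
    HasDerivAt gAux (x * (2 - x) / (4 * (1 + x) ^ 2)) x := by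
  have hx0 : (0:ℝ) < 1 + x := by linarith
  have h1 : HasDerivAt (fun a : ℝ => Real.log (1 + a)) (1 / (1 + x)) x := by
    have := (Real.hasDerivAt_log hx0.ne').comp x ((hasDerivAt_id x).const_add 1)
    simpa [Function.comp_def] using this
  have h2 : HasDerivAt (fun a : ℝ => a + a ^ 2 / 4) (1 + 2 * x / 4) x := by
    have := ((hasDerivAt_id x).add (((hasDerivAt_id x).pow 2).div_const 4))
    simpa [Pi.add_def] using this
  have h3 : HasDerivAt (fun a : ℝ => 1 + a) 1 x := by
    simpa using (hasDerivAt_id x).const_add 1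
  have h4 := (h2.div h3 hx0.ne')
  have h5 := h1.sub h4
  refine h5.congr_deriv ?_
  field_simp
  ring

private lemma gAux_deriv {x : ℝ} (hx : -1 < x) :
    deriv gAux x = x * (2 - x) / (4 * (1 + x) ^ 2) := (gAux_hasDerivAt hx).deriv

private lemma gAux_cont : ContinuousOn gAux (Icc (-1/2 : ℝ) 4) := by
  intro x hx
  have hx1 : (-1:ℝ) < x := by have := hx.1; norm_num at this ⊢; linarith
  exact ((gAux_hasDerivAt hx1).differentiableAt.continuousAt).continuousWithinAt

private lemma gAux_mono : StrictMonoOn gAux (Icc (0:ℝ) 2) := by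
  apply strictMonoOn_of_deriv_pos (convex_Icc 0 2)
  · exact gAux_cont.mono (by intro x hx; constructor <;> [linarith [hx.1]; linarith [hx.2]])
  · intro x hx
    rw [interior_Icc] at hx
    rw [gAux_deriv (by linarith [hx.1])]
    have h1 : (0:ℝ) < 1 + x := by linarith [hx.1]
    apply div_pos
    · nlinarith [hx.1, hx.2]
    · positivity

private lemma gAux_anti : StrictAntiOn gAux (Icc (2:ℝ) 4) := by
  apply strictAntiOn_of_deriv_neg (convex_Icc 2 4)
  · exact gAux_cont.mono (by intro x hx; constructor <;> [linarith [hx.1]; linarith [hx.2]])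
  · intro x hx
    rw [interior_Icc] at hx
    rw [gAux_deriv (by linarith [hx.1])]
    have h1 : (0:ℝ) < 1 + x := by linarith [hx.1]
    apply div_neg_of_neg_of_pos
    · nlinarith [hx.1, hx.2]
    · positivity

private lemma gAux_zero : gAux 0 = 0 := by simp [gAux]

private lemma exp_85_lt : Real.exp (8/5) < 5 := by
  have h1 : Real.exp (8/5) ^ (5:ℕ) = Real.exp 8 := by
    rw [← Real.exp_nat_mul]; norm_num
  have h2 : Real.exp 8 = Real.exp 1 ^ (8:ℕ) := by
    rw [← Real.exp_nat_mul]; norm_num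
  have h3 : Real.exp 1 ^ (8:ℕ) < 2.7182818286 ^ (8:ℕ) := by
    apply pow_lt_pow_left₀ Real.exp_one_lt_d9 (Real.exp_pos 1).le
    norm_num
  have h4 : (2.7182818286:ℝ) ^ (8:ℕ) < 5 ^ (5:ℕ) := by norm_num
  have h5 : Real.exp (8/5) ^ (5:ℕ) < 5 ^ (5:ℕ) := by
    rw [h1, h2]; linarith
  exact lt_of_pow_lt_pow_left₀ 5 (by norm_num) h5

private lemma gAux_four : 0 < gAux 4 := by
  have : (8:ℝ)/5 < Real.log 5 := by
    rw [Real.lt_log_iff_exp_lt (by norm_num)]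
    exact exp_85_lt
  unfold gAux
  norm_num
  linarith

/-- For `0 < a ≤ 4`, `a²/4 < (1+a)log(1+a) - a`. -/
theorem sq_div_four_lt_h (a : ℝ) (ha : 0 < a) (ha' : a ≤ 4) :
    a ^ 2 / 4 < (1 + a) * Real.log (1 + a) - a := by
  have hpos : (0:ℝ) < 1 + a := by linarith
  have hg : 0 < gAux a := by
    rcases le_or_gt a 2 with h | h
    · have := gAux_mono (by constructor <;> norm_num) (by constructor <;> linarith) ha
      rwa [gAux_zero] at this
    · rcases lt_or_eq_of_le ha' with h4 | h4
      · have := gAux_anti (by constructor <;> linarith) (by constructor <;> norm_num) h4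
        exact lt_trans gAux_four this
      · rw [h4]; exact gAux_four
  have : (a + a ^ 2 / 4) / (1 + a) < Real.log (1 + a) := by
    unfold gAux at hg; linarith
  have h2 := (div_lt_iff₀ hpos).mp this
  nlinarith
end

section
/- Let 1 ≤ c ≤ d/2, q = (1/d)(1 + √((d-c)/(c(d-1)))), x ∈ ℝ^d with s_x = Σ_j x_j, and y ∈ ℝ^d defined by y_i = x_i - q s_x. Then ‖y‖² = ‖x‖² - ((c-1)/(c(d-1))) s_x², and in particular ‖y‖² ≤ ‖x‖². -/
open Finset

/-- With `q = (1/d)(1 + √((d-c)/(c(d-1))))` and `y i = x i - q s_x`,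
`‖y‖² = ‖x‖² - ((c-1)/(c(d-1))) s_x²`, hence `‖y‖² ≤ ‖x‖²`. -/
theorem debiased_norm_identity
    {d c : ℕ} (hc : 1 ≤ c) (hcd : 2 * c ≤ d) (hd : 2 ≤ d)
    (x : Fin d → ℝ) :
    let sx : ℝ := ∑ j, x j
    let q : ℝ := (1 / d) * (1 + Real.sqrt ((d - c) / (c * (d - 1))))
    let y : Fin d → ℝ := fun i => x i - q * sx
    (∑ i, (y i) ^ 2 = ∑ i, (x i) ^ 2 - ((c - 1 : ℝ) / (c * (d - 1))) * sx ^ 2) ∧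
    ∑ i, (y i) ^ 2 ≤ ∑ i, (x i) ^ 2 := by
  intro sx q y
  have hd0 : (0:ℝ) < d := by positivity
  have hc0 : (0:ℝ) < c := by exact_mod_cast hc
  have hd1 : (0:ℝ) < (d:ℝ) - 1 := by
    have : (2:ℝ) ≤ d := by exact_mod_cast hd
    linarith
  have hdc : (0:ℝ) ≤ (d:ℝ) - c := by
    have : (c:ℝ) ≤ d := by
      have : (2*c:ℝ) ≤ d := by exact_mod_cast hcd
      linarith
    linarith
  set r := Real.sqrt ((d - c) / (c * (d - 1))) with hr
  have hr2 : r ^ 2 = ((d:ℝ) - c) / (c * ((d:ℝ) - 1)) := by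
    rw [hr, Real.sq_sqrt (by positivity)]
  have hq : d * q ^ 2 - 2 * q = -(((c:ℝ) - 1) / (c * ((d:ℝ) - 1))) := by
    have : q = (1 / d) * (1 + r) := rfl
    have hr2' : r ^ 2 * ((c:ℝ) * ((d:ℝ) - 1)) = (d:ℝ) - c := by
      rw [hr2]; field_simp
    rw [this]
    field_simp
    linear_combination hr2'
  have hexp : ∀ i, y i ^ 2 = x i ^ 2 - 2 * q * sx * x i + q ^ 2 * sx ^ 2 := by
    intro i; show (x i - q * sx) ^ 2 = _; ring
  have hsum : ∑ i, y i ^ 2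
      = ∑ i, x i ^ 2 - 2 * q * sx * sx + (d:ℝ) * (q ^ 2 * sx ^ 2) := by
    simp only [hexp]
    rw [Finset.sum_add_distrib, Finset.sum_sub_distrib, ← Finset.mul_sum,
      Finset.sum_const, Finset.card_fin, nsmul_eq_mul]
  have hid : ∑ i, y i ^ 2 = ∑ i, x i ^ 2 - ((c - 1 : ℝ) / (c * (d - 1))) * sx ^ 2 := by
    rw [hsum]
    have : (d:ℝ) * (q ^ 2 * sx ^ 2) - 2 * q * sx * sx
        = (d * q ^ 2 - 2 * q) * sx ^ 2 := by ring
    nlinarith [hq, this]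
  refine ⟨hid, ?_⟩
  rw [hid]
  have h1 : (0:ℝ) ≤ ((c - 1 : ℝ) / (c * (d - 1))) := by
    apply div_nonneg
    · have : (1:ℝ) ≤ c := by exact_mod_cast hc
      linarith
    · positivity
  nlinarith [sq_nonneg sx]
end

section
/- Let J be a uniformly random c-element subset of {1,...,d}, x ∈ ℝ^d, q = (1/d)(1 + √((d-c)/(c(d-1)))), y_i = x_i - q s_x, and η = Σ_{j∈J} y_j. Then E[η²] = (c(d-c))/(d(d-1)) · ‖x‖². -/
open Finset

lemma count_supersets {α : Type*} [DecidableEq α] (u s : Finset α) (hsu : s ⊆ u)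
    {c : ℕ} (hsc : s.card ≤ c) :
    ((powersetCard c u).filter (fun J => s ⊆ J)).card
      = (u.card - s.card).choose (c - s.card) := by
  rw [show #u - #s = #(u \ s) from (card_sdiff_of_subset hsu).symm, ← card_powersetCard]
  apply card_bij (fun J _ => J \ s)
  · intro J hJ
    simp only [mem_filter, mem_powersetCard] at hJ
    obtain ⟨⟨hJu, hJc⟩, hsJ⟩ := hJ
    rw [mem_powersetCard]
    exact ⟨sdiff_subset_sdiff hJu (subset_refl s), by rw [card_sdiff_of_subset hsJ, hJc]⟩
  · intro J hJ J' hJ' h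
    simp only [mem_filter] at hJ hJ'
    rw [← sdiff_union_of_subset hJ.2, ← sdiff_union_of_subset hJ'.2, h]
  · intro K hK
    rw [mem_powersetCard] at hK
    have hdisj : Disjoint K s := disjoint_of_subset_left hK.1 sdiff_disjoint
    refine ⟨K ∪ s, ?_, ?_⟩
    · simp only [mem_filter, mem_powersetCard]
      refine ⟨⟨union_subset (hK.1.trans sdiff_subset) hsu, ?_⟩, subset_union_right⟩
      rw [card_union_of_disjoint hdisj, hK.2]
      omega
    · rw [union_sdiff_right, Finset.sdiff_eq_self_iff_disjoint.2 hdisj]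

lemma count_supersets_empty {α : Type*} [DecidableEq α] (u s : Finset α)
    {c : ℕ} (hsc : c < s.card) :
    ((powersetCard c u).filter (fun J => s ⊆ J)) = ∅ := by
  rw [eq_empty_iff_forall_notMem]
  intro J hJ
  simp only [mem_filter, mem_powersetCard] at hJ
  have := card_le_card hJ.2
  omega

/-- With `y i = x i - q s_x`, `q = (1/d)(1 + √((d-c)/(c(d-1))))`, and
`η = ∑_{j ∈ J} y j` for `J` a uniformly random `c`-subset of `{1,...,d}`,
`E[η²] = (c(d-c))/(d(d-1)) ‖x‖²`. -/
theorem fixed_sparsity_second_moment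
    {d c : ℕ} (hc : 1 ≤ c) (hcd : 2 * c ≤ d) (hd : 2 ≤ d)
    (x : Fin d → ℝ) :
    let sx : ℝ := ∑ j, x j
    let q : ℝ := (1 / d) * (1 + Real.sqrt ((d - c) / (c * (d - 1))))
    let y : Fin d → ℝ := fun i => x i - q * sx
    (1 / (d.choose c : ℝ)) *
        ∑ J ∈ Finset.powersetCard c (Finset.univ : Finset (Fin d)), (∑ j ∈ J, y j) ^ 2
      = ((c : ℝ) * (d - c)) / (d * (d - 1)) * ∑ j, (x j) ^ 2 := by
  intro sx q y
  have hcled : c ≤ d := by omega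
  -- real-number abbreviations and nonvanishing facts
  set D : ℝ := (d : ℝ) with hD
  set Cc : ℝ := (c : ℝ) with hCc
  set C : ℝ := (d.choose c : ℝ) with hC
  have hD2 : (2 : ℝ) ≤ D := by rw [hD]; exact_mod_cast hd
  have hCc1 : (1 : ℝ) ≤ Cc := by rw [hCc]; exact_mod_cast hc
  have hDCc : Cc ≤ D := by rw [hCc, hD]; exact_mod_cast hcled
  have hD0 : D ≠ 0 := by linarith
  have hD1 : D - 1 ≠ 0 := by linarith
  have hCc0 : Cc ≠ 0 := by linarith
  have hC0 : C ≠ 0 := by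
    have : 0 < d.choose c := Nat.choose_pos hcled
    rw [hC]
    exact_mod_cast this.ne'
  -- sqrt facts
  set t : ℝ := (D - Cc) / (Cc * (D - 1)) with ht
  have ht0 : 0 ≤ t := by
    apply div_nonneg <;> nlinarith [hD2, hCc1, hDCc]
  set r : ℝ := Real.sqrt t with hr
  have hr2 : r ^ 2 = t := Real.sq_sqrt ht0
  -- counts
  set N : Fin d → Fin d → ℕ := fun i j =>
    ((powersetCard c (univ : Finset (Fin d))).filter (fun J => i ∈ J ∧ j ∈ J)).card with hN
  set a : ℝ := Cc * C / D with ha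
  set b : ℝ := Cc * (Cc - 1) * C / (D * (D - 1)) with hb
  have hchoose1 : d * (d - 1).choose (c - 1) = d.choose c * c := by
    have h := Nat.add_one_mul_choose_eq (d - 1) (c - 1)
    rw [show d - 1 + 1 = d by omega, show c - 1 + 1 = c by omega] at h
    exact h
  have hNa : ∀ i : Fin d, (N i i : ℝ) = a := by
    intro i
    have hflt : (powersetCard c (univ : Finset (Fin d))).filter (fun J => i ∈ J ∧ i ∈ J)
        = (powersetCard c (univ : Finset (Fin d))).filter (fun J => ({i} : Finset (Fin d)) ⊆ J) := by
      apply filter_congr; intro J _; simp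
    have hcount : N i i = (d - 1).choose (c - 1) := by
      rw [hN]
      simp only
      rw [hflt, count_supersets _ _ (subset_univ _) (by simp; omega)]
      simp [card_univ]
    have h' : (d - 1).choose (c - 1) * d = c * d.choose c := by
      rw [mul_comm, hchoose1, mul_comm]
    have hcast : ((d - 1).choose (c - 1) : ℝ) * (d : ℝ) = (c : ℝ) * (d.choose c : ℝ) := by
      exact_mod_cast h'
    rw [hcount, ha, eq_div_iff hD0, hC, hCc, hD]
    linear_combination hcast
  have hNb : ∀ i j : Fin d, i ≠ j → (N i j : ℝ) = b := by
    intro i j hij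
    rcases Nat.lt_or_ge c 2 with h2 | h2
    · have hc1 : c = 1 := by omega
      have hcount : N i j = 0 := by
        rw [hN]; simp only
        have hflt : (powersetCard c (univ : Finset (Fin d))).filter (fun J => i ∈ J ∧ j ∈ J)
            = (powersetCard c (univ : Finset (Fin d))).filter
                (fun J => ({i, j} : Finset (Fin d)) ⊆ J) := by
          apply filter_congr; intro J _; simp [insert_subset_iff]
        rw [hflt, count_supersets_empty]
        · simp
        · rw [card_insert_of_notMem (by simp [hij]), card_singleton]; omega
      rw [hcount, hb, hCc, hc1]
      norm_num
    · have hflt : (powersetCard c (univ : Finset (Fin d))).filter (fun J => i ∈ J ∧ j ∈ J)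
          = (powersetCard c (univ : Finset (Fin d))).filter
              (fun J => ({i, j} : Finset (Fin d)) ⊆ J) := by
        apply filter_congr; intro J _; simp [insert_subset_iff]
      have hcard2 : ({i, j} : Finset (Fin d)).card = 2 := by
        rw [card_insert_of_notMem (by simp [hij]), card_singleton]
      have hcount : N i j = (d - 2).choose (c - 2) := by
        rw [hN]; simp only
        rw [hflt, count_supersets _ _ (subset_univ _) (by rw [hcard2]; omega)]
        rw [hcard2, card_univ, Fintype.card_fin]
      have hchoose2 : (d - 1) * (d - 2).choose (c - 2) = (d - 1).choose (c - 1) * (c - 1) := by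
        have h := Nat.add_one_mul_choose_eq (d - 2) (c - 2)
        rw [show d - 2 + 1 = d - 1 by omega, show c - 2 + 1 = c - 1 by omega] at h
        exact h
      have hkey : d * (d - 1) * (d - 2).choose (c - 2) = d.choose c * c * (c - 1) := by
        calc d * (d - 1) * (d - 2).choose (c - 2) = d * ((d-1) * (d-2).choose (c-2)) := by ring
        _ = d * ((d - 1).choose (c - 1) * (c - 1)) := by rw [hchoose2]
        _ = (d * (d - 1).choose (c - 1)) * (c - 1) := by ring
        _ = d.choose c * c * (c - 1) := by rw [hchoose1]
      have hcast := congrArg (fun n : ℕ => (n : ℝ)) hkey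
      push_cast [Nat.cast_sub (show 1 ≤ d by omega), Nat.cast_sub (show 1 ≤ c by omega)] at hcast
      rw [hcount, hb, eq_div_iff (mul_ne_zero hD0 hD1), hC, hCc, hD]
      linear_combination hcast
  -- the expansion of the sum of squares
  have hexp : ∑ J ∈ Finset.powersetCard c (Finset.univ : Finset (Fin d)), (∑ j ∈ J, y j) ^ 2
      = ∑ i : Fin d, ∑ j : Fin d, (N i j : ℝ) * (y i * y j) := by
    have h1 : ∀ J ∈ powersetCard c (univ : Finset (Fin d)),
        (∑ j ∈ J, y j) ^ 2 = ∑ i : Fin d, ∑ j : Fin d,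
          if i ∈ J ∧ j ∈ J then y i * y j else 0 := by
      intro J _
      rw [sq, Finset.sum_mul_sum]
      have h2 : ∀ i : Fin d, (∑ j : Fin d, if i ∈ J ∧ j ∈ J then y i * y j else 0)
          = if i ∈ J then ∑ j ∈ J, y i * y j else 0 := by
        intro i
        by_cases h : i ∈ J <;> simp [h, Finset.sum_ite_mem]
      rw [Finset.sum_congr rfl fun i _ => h2 i]
      simp [Finset.sum_ite_mem]
    rw [Finset.sum_congr rfl h1, Finset.sum_comm]
    refine Finset.sum_congr rfl fun i _ => ?_
    rw [Finset.sum_comm]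
    refine Finset.sum_congr rfl fun j _ => ?_
    rw [← Finset.sum_filter, Finset.sum_const, nsmul_eq_mul]
  -- split diagonal and off-diagonal
  have hsplit : ∑ i : Fin d, ∑ j : Fin d, (N i j : ℝ) * (y i * y j)
      = b * ((∑ j, y j) * (∑ j, y j)) + (a - b) * ∑ j, (y j) ^ 2 := by
    have h3 : ∀ i j : Fin d, (N i j : ℝ) * (y i * y j)
        = b * (y i * y j) + (if i = j then (a - b) * (y i * y j) else 0) := by
      intro i j
      by_cases h : i = j
      · subst h; rw [hNa i]; simp; ring
      · rw [hNb i j h]; simp [h]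
    calc ∑ i : Fin d, ∑ j : Fin d, (N i j : ℝ) * (y i * y j)
        = ∑ i : Fin d, ∑ j : Fin d,
            (b * (y i * y j) + (if i = j then (a - b) * (y i * y j) else 0)) := by
          exact Finset.sum_congr rfl fun i _ => Finset.sum_congr rfl fun j _ => h3 i j
      _ = ∑ i : Fin d, (b * (y i * ∑ j, y j) + (a - b) * (y i * y i)) := by
          refine Finset.sum_congr rfl fun i _ => ?_
          rw [Finset.sum_add_distrib, Finset.sum_ite_eq]
          simp [Finset.mul_sum]
      _ = b * ((∑ j, y j) * (∑ j, y j)) + (a - b) * ∑ j, (y j) ^ 2 := by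
          rw [Finset.sum_add_distrib, ← Finset.mul_sum, ← Finset.mul_sum, ← Finset.sum_mul]
          simp [sq]
  -- sums of y
  have hsy : (∑ j, y j) = -r * sx := by
    have : (∑ j, y j) = sx - D * (q * sx) := by
      simp only [y, Finset.sum_sub_distrib, Finset.sum_const, card_univ, Fintype.card_fin,
        nsmul_eq_mul]
      rfl
    rw [this]
    have hq : q = (1 / D) * (1 + r) := rfl
    rw [hq]
    field_simp
    ring
  have hy2 : (∑ j, (y j) ^ 2) = (∑ j, (x j) ^ 2) + (D * q ^ 2 - 2 * q) * sx ^ 2 := by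
    have h4 : ∀ j : Fin d, (y j) ^ 2 = (x j) ^ 2 - 2 * q * sx * x j + q ^ 2 * sx ^ 2 := by
      intro j; simp only [y]; ring
    rw [Finset.sum_congr rfl fun j _ => h4 j]
    rw [Finset.sum_add_distrib, Finset.sum_sub_distrib, Finset.sum_const, ← Finset.mul_sum,
      card_univ, Fintype.card_fin, nsmul_eq_mul]
    rw [hD]; simp only [sx]; ring
  have hq2 : D * q ^ 2 - 2 * q = (t - 1) / D := by
    have hq : q = (1 / D) * (1 + r) := rfl
    rw [hq]
    rw [← hr2]
    field_simp
    ring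
  -- put everything together
  rw [hexp, hsplit, hsy, hy2, hq2]
  have hfin : (1 / C) * (b * ((-r * sx) * (-r * sx))
      + (a - b) * ((∑ j, (x j) ^ 2) + ((t - 1) / D) * sx ^ 2))
      = Cc * (D - Cc) / (D * (D - 1)) * ∑ j, (x j) ^ 2 := by
    have hrr : (-r * sx) * (-r * sx) = t * sx ^ 2 := by
      have : (-r * sx) * (-r * sx) = r ^ 2 * sx ^ 2 := by ring
      rw [this, hr2]
    rw [hrr, ha, hb, ht]
    field_simp
    ring
  exact hfin
end

section
/- Let J be a uniformly random c-element subset of {1,...,d} with 5 ≤ c ≤ d/2, x ∈ ℝ^d, q = (1/d)(1 + √((d-c)/(c(d-1)))), y_i = x_i - q s_x, and η = Σ_{j∈J} y_j. Then E[η⁴] ≤ (5c/d) ‖x‖⁴. -/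
open Finset

section CombAux
variable {m : ℕ} (y : Fin m → ℝ) (NN : ℕ → ℝ)

private lemma sum_split (f : Fin m → ℝ) (g : Finset (Fin m) → ℝ) (T : Finset (Fin m)) :
    ∑ j, f j * g (insert j T)
      = (∑ j ∈ T, f j) * g T + ∑ j ∈ univ \ T, f j * g (insert j T) := by
  rw [← Finset.sum_sdiff (Finset.subset_univ T)]
  have h : ∀ j ∈ T, f j * g (insert j T) = f j * g T := fun j hj => by
    rw [Finset.insert_eq_self.2 hj]
  rw [Finset.sum_congr rfl h, ← Finset.sum_mul]
  ring

noncomputable def phi3 (T : Finset (Fin m)) : ℝ :=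
  (NN T.card - NN (T.card + 1)) * (∑ j ∈ T, y j) + NN (T.card + 1) * (∑ j, y j)

noncomputable def phi2 (T : Finset (Fin m)) : ℝ :=
  (∑ j ∈ T, y j) * phi3 y NN T
  + ((NN (T.card + 1) - NN (T.card + 2)) * (∑ j ∈ T, y j) + NN (T.card + 2) * (∑ j, y j))
      * ((∑ j, y j) - ∑ j ∈ T, y j)
  + (NN (T.card + 1) - NN (T.card + 2)) * ((∑ j, y j ^ 2) - ∑ j ∈ T, y j ^ 2)

noncomputable def phi1 (T : Finset (Fin m)) : ℝ :=
  (∑ j ∈ T, y j) * phi2 y NN T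
  + ((NN (T.card + 1) - NN (T.card + 2)) * (∑ j ∈ T, y j) ^ 2
      + NN (T.card + 2) * (∑ j, y j) * (∑ j ∈ T, y j)
      + ((NN (T.card + 2) - NN (T.card + 3)) * (∑ j ∈ T, y j) + NN (T.card + 3) * (∑ j, y j))
          * ((∑ j, y j) - ∑ j ∈ T, y j)
      + (NN (T.card + 2) - NN (T.card + 3)) * ((∑ j, y j ^ 2) - ∑ j ∈ T, y j ^ 2))
      * ((∑ j, y j) - ∑ j ∈ T, y j)
  + (2 * (NN (T.card + 1) - NN (T.card + 2)) * (∑ j ∈ T, y j) + NN (T.card + 2) * (∑ j, y j)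
      + (NN (T.card + 2) - NN (T.card + 3)) * ((∑ j, y j) - 2 * (∑ j ∈ T, y j))
      - NN (T.card + 3) * (∑ j, y j))
      * ((∑ j, y j ^ 2) - ∑ j ∈ T, y j ^ 2)
  + (NN (T.card + 1) - 3 * NN (T.card + 2) + 2 * NN (T.card + 3))
      * ((∑ j, y j ^ 3) - ∑ j ∈ T, y j ^ 3)

private lemma L4 (T : Finset (Fin m)) :
    ∑ j, y j * NN ((insert j T).card) = phi3 y NN T := by
  rw [sum_split y (fun U => NN U.card) T]
  have h : ∀ j ∈ univ \ T, y j * NN ((insert j T).card) = y j * NN (T.card + 1) := by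
    intro j hj
    rw [Finset.card_insert_of_notMem (Finset.mem_sdiff.1 hj).2]
  rw [Finset.sum_congr rfl h, ← Finset.sum_mul, Finset.sum_sdiff_eq_sub (Finset.subset_univ T)]
  unfold phi3
  ring

private lemma L3 (T : Finset (Fin m)) :
    ∑ j, y j * phi3 y NN (insert j T) = phi2 y NN T := by
  rw [sum_split y (phi3 y NN) T]
  have h : ∀ j ∈ univ \ T, y j * phi3 y NN (insert j T)
      = ((NN (T.card + 1) - NN (T.card + 2)) * (∑ i ∈ T, y i) + NN (T.card + 2) * (∑ i, y i)) * y j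
        + (NN (T.card + 1) - NN (T.card + 2)) * y j ^ 2 := by
    intro j hj
    have hjT : j ∉ T := (Finset.mem_sdiff.1 hj).2
    rw [phi3, Finset.card_insert_of_notMem hjT, Finset.sum_insert hjT,
      show T.card + 1 + 1 = T.card + 2 from rfl]
    ring
  rw [Finset.sum_congr rfl h, Finset.sum_add_distrib, ← Finset.mul_sum, ← Finset.mul_sum,
    Finset.sum_sdiff_eq_sub (Finset.subset_univ T), Finset.sum_sdiff_eq_sub (Finset.subset_univ T)]
  unfold phi2 phi3
  ring

private lemma L2 (T : Finset (Fin m)) :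
    ∑ j, y j * phi2 y NN (insert j T) = phi1 y NN T := by
  rw [sum_split y (phi2 y NN) T]
  have h : ∀ j ∈ univ \ T, y j * phi2 y NN (insert j T)
      = ((NN (T.card + 1) - NN (T.card + 2)) * (∑ i ∈ T, y i) ^ 2
          + NN (T.card + 2) * (∑ i, y i) * (∑ i ∈ T, y i)
          + ((NN (T.card + 2) - NN (T.card + 3)) * (∑ i ∈ T, y i) + NN (T.card + 3) * (∑ i, y i))
              * ((∑ i, y i) - ∑ i ∈ T, y i)
          + (NN (T.card + 2) - NN (T.card + 3)) * ((∑ i, y i ^ 2) - ∑ i ∈ T, y i ^ 2)) * y j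
        + (2 * (NN (T.card + 1) - NN (T.card + 2)) * (∑ i ∈ T, y i) + NN (T.card + 2) * (∑ i, y i)
          + (NN (T.card + 2) - NN (T.card + 3)) * ((∑ i, y i) - 2 * (∑ i ∈ T, y i))
          - NN (T.card + 3) * (∑ i, y i)) * y j ^ 2
        + (NN (T.card + 1) - 3 * NN (T.card + 2) + 2 * NN (T.card + 3)) * y j ^ 3 := by
    intro j hj
    have hjT : j ∉ T := (Finset.mem_sdiff.1 hj).2
    rw [phi2, phi3, Finset.card_insert_of_notMem hjT, Finset.sum_insert hjT,
      Finset.sum_insert hjT,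
      show T.card + 1 + 1 = T.card + 2 from rfl, show T.card + 1 + 2 = T.card + 3 from rfl]
    ring
  rw [Finset.sum_congr rfl h, Finset.sum_add_distrib, Finset.sum_add_distrib,
    ← Finset.mul_sum, ← Finset.mul_sum, ← Finset.mul_sum,
    Finset.sum_sdiff_eq_sub (Finset.subset_univ T), Finset.sum_sdiff_eq_sub (Finset.subset_univ T),
    Finset.sum_sdiff_eq_sub (Finset.subset_univ T)]
  unfold phi1 phi2 phi3
  ring

private lemma L1 :
    ∑ j, y j * phi1 y NN {j}
      = NN 1 * (∑ j, y j ^ 4)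
        + NN 2 * (4 * ((∑ j, y j ^ 3) * (∑ j, y j) - (∑ j, y j ^ 4))
            + 3 * ((∑ j, y j ^ 2) ^ 2 - (∑ j, y j ^ 4)))
        + 6 * NN 3 * ((∑ j, y j ^ 2) * (∑ j, y j) ^ 2 - (∑ j, y j ^ 2) ^ 2
            - 2 * (∑ j, y j ^ 3) * (∑ j, y j) + 2 * (∑ j, y j ^ 4))
        + NN 4 * ((∑ j, y j) ^ 4 - 6 * (∑ j, y j ^ 2) * (∑ j, y j) ^ 2
            + 8 * (∑ j, y j ^ 3) * (∑ j, y j) + 3 * (∑ j, y j ^ 2) ^ 2 - 6 * (∑ j, y j ^ 4)) := by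
  have h : ∀ j : Fin m, y j * phi1 y NN {j}
      = (((NN 2 - 3 * NN 3 + 2 * NN 4) * (∑ i, y i ^ 3)
            + (3 * NN 3 - 3 * NN 4) * (∑ i, y i) * (∑ i, y i ^ 2)
            + NN 4 * (∑ i, y i) ^ 3) * y j)
        + (((3 * NN 2 - 6 * NN 3 + 3 * NN 4) * (∑ i, y i ^ 2)
            + (3 * NN 3 - 3 * NN 4) * (∑ i, y i) ^ 2) * y j ^ 2)
        + (((3 * NN 2 - 9 * NN 3 + 6 * NN 4) * (∑ i, y i)) * y j ^ 3)
        + ((NN 1 - 7 * NN 2 + 12 * NN 3 - 6 * NN 4) * y j ^ 4) := by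
    intro j
    rw [phi1, phi2, phi3, Finset.card_singleton, Finset.sum_singleton, Finset.sum_singleton,
      Finset.sum_singleton,
      show (1:ℕ) + 1 = 2 from rfl, show (1:ℕ) + 2 = 3 from rfl, show (1:ℕ) + 3 = 4 from rfl]
    ring
  rw [Finset.sum_congr rfl (fun j _ => h j), Finset.sum_add_distrib, Finset.sum_add_distrib,
    Finset.sum_add_distrib, ← Finset.mul_sum, ← Finset.mul_sum, ← Finset.mul_sum, ← Finset.mul_sum]
  ring

end CombAux

private lemma card_filter_superset {d c : ℕ} (T : Finset (Fin d)) (hT : T.card ≤ c) :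
    ((powersetCard c (univ : Finset (Fin d))).filter (fun J => T ⊆ J)).card
      = (d - T.card).choose (c - T.card) := by
  have key : ((powersetCard c (univ : Finset (Fin d))).filter (fun J => T ⊆ J)).card
      = (powersetCard (c - T.card) ((univ : Finset (Fin d)) \ T)).card := by
    apply Finset.card_bij' (fun J _ => J \ T) (fun K _ => K ∪ T)
    · intro J hJ
      simp only [Finset.mem_filter, Finset.mem_powersetCard] at hJ
      obtain ⟨⟨hJu, hJc⟩, hTJ⟩ := hJ
      simp only [Finset.mem_powersetCard]
      exact ⟨Finset.sdiff_subset_sdiff hJu Finset.Subset.rfl,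
        by rw [Finset.card_sdiff_of_subset hTJ, hJc]⟩
    · intro K hK
      simp only [Finset.mem_powersetCard] at hK
      obtain ⟨hKu, hKc⟩ := hK
      have hdisj : Disjoint K T := by
        refine Finset.disjoint_left.2 fun a ha haT => ?_
        exact (Finset.mem_sdiff.1 (hKu ha)).2 haT
      simp only [Finset.mem_filter, Finset.mem_powersetCard]
      refine ⟨⟨Finset.subset_univ _, ?_⟩, Finset.subset_union_right⟩
      rw [Finset.card_union_of_disjoint hdisj, hKc, Nat.sub_add_cancel hT]
    · intro J hJ
      simp only [Finset.mem_filter, Finset.mem_powersetCard] at hJ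
      exact Finset.sdiff_union_of_subset hJ.2
    · intro K hK
      simp only [Finset.mem_powersetCard] at hK
      have hdisj : Disjoint K T := by
        refine Finset.disjoint_left.2 fun a ha haT => ?_
        exact (Finset.mem_sdiff.1 (hK.1 ha)).2 haT
      exact Finset.union_sdiff_cancel_right hdisj
  rw [key, Finset.card_powersetCard, Finset.card_sdiff_of_subset (Finset.subset_univ T),
    Finset.card_univ, Fintype.card_fin]

private lemma pow_four {m : ℕ} (a : Fin m → ℝ) :
    (∑ j, a j) ^ 4 = ∑ j1, ∑ j2, ∑ j3, ∑ j4, a j1 * a j2 * a j3 * a j4 := by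
  rw [show ((∑ j, a j) ^ 4) = (∑ j, a j) * (∑ j, a j) * (∑ j, a j) * (∑ j, a j) by ring]
  simp only [Finset.sum_mul, Finset.mul_sum]
  exact Finset.sum_congr rfl fun _ _ => Finset.sum_congr rfl fun _ _ =>
    Finset.sum_congr rfl fun _ _ => Finset.sum_congr rfl fun _ _ => by ring

private lemma ite_prod {m : ℕ} (y : Fin m → ℝ) (J : Finset (Fin m)) (j1 j2 j3 j4 : Fin m) :
    (if j1 ∈ J then y j1 else 0) * (if j2 ∈ J then y j2 else 0) * (if j3 ∈ J then y j3 else 0)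
        * (if j4 ∈ J then y j4 else 0)
      = if insert j4 (insert j3 (insert j2 ({j1} : Finset (Fin m)))) ⊆ J
          then y j1 * y j2 * y j3 * y j4 else 0 := by
  simp only [Finset.insert_subset_iff, Finset.singleton_subset_iff]
  by_cases h1 : j1 ∈ J <;> by_cases h2 : j2 ∈ J <;> by_cases h3 : j3 ∈ J <;>
    by_cases h4 : j4 ∈ J <;> simp [h1, h2, h3, h4]

private lemma expand_quartic {d c : ℕ} (hc : 4 ≤ c) (y : Fin d → ℝ) :
    ∑ J ∈ powersetCard c (univ : Finset (Fin d)), (∑ j ∈ J, y j) ^ 4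
      = ∑ j1, ∑ j2, ∑ j3, ∑ j4, (y j1 * y j2 * y j3 * y j4) *
          (fun k => ((d - k).choose (c - k) : ℝ))
            ((insert j4 (insert j3 (insert j2 ({j1} : Finset (Fin d))))).card) := by
  have hstep1 : ∀ J ∈ powersetCard c (univ : Finset (Fin d)),
      (∑ j ∈ J, y j) ^ 4 = ∑ j1, ∑ j2, ∑ j3, ∑ j4,
        (if insert j4 (insert j3 (insert j2 ({j1} : Finset (Fin d)))) ⊆ J
          then y j1 * y j2 * y j3 * y j4 else 0) := by
    intro J _
    have h0 : (∑ j ∈ J, y j) = ∑ j, if j ∈ J then y j else 0 := by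
      rw [Finset.sum_ite_mem, Finset.univ_inter]
    rw [h0, pow_four]
    exact Finset.sum_congr rfl fun j1 _ => Finset.sum_congr rfl fun j2 _ =>
      Finset.sum_congr rfl fun j3 _ => Finset.sum_congr rfl fun j4 _ => ite_prod y J j1 j2 j3 j4
  rw [Finset.sum_congr rfl hstep1, Finset.sum_comm]
  refine Finset.sum_congr rfl fun j1 _ => ?_
  rw [Finset.sum_comm]
  refine Finset.sum_congr rfl fun j2 _ => ?_
  rw [Finset.sum_comm]
  refine Finset.sum_congr rfl fun j3 _ => ?_
  rw [Finset.sum_comm]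
  refine Finset.sum_congr rfl fun j4 _ => ?_
  have hT : (insert j4 (insert j3 (insert j2 ({j1} : Finset (Fin d))))).card ≤ c := by
    have a1 := Finset.card_insert_le j2 ({j1} : Finset (Fin d))
    have a2 := Finset.card_insert_le j3 (insert j2 ({j1} : Finset (Fin d)))
    have a3 := Finset.card_insert_le j4 (insert j3 (insert j2 ({j1} : Finset (Fin d))))
    have a0 : ({j1} : Finset (Fin d)).card = 1 := Finset.card_singleton j1
    omega
  rw [← Finset.sum_filter, Finset.sum_const, card_filter_superset _ hT, nsmul_eq_mul]
  exact mul_comm _ _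

/-- Key combinatorial identity. -/
private lemma key_identity {d c : ℕ} (hc : 4 ≤ c) (y : Fin d → ℝ) :
    ∑ J ∈ powersetCard c (univ : Finset (Fin d)), (∑ j ∈ J, y j) ^ 4
      = ((d - 1).choose (c - 1) : ℝ) * (∑ j, y j ^ 4)
        + ((d - 2).choose (c - 2) : ℝ) * (4 * ((∑ j, y j ^ 3) * (∑ j, y j) - (∑ j, y j ^ 4))
            + 3 * ((∑ j, y j ^ 2) ^ 2 - (∑ j, y j ^ 4)))
        + 6 * ((d - 3).choose (c - 3) : ℝ) * ((∑ j, y j ^ 2) * (∑ j, y j) ^ 2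
            - (∑ j, y j ^ 2) ^ 2 - 2 * (∑ j, y j ^ 3) * (∑ j, y j) + 2 * (∑ j, y j ^ 4))
        + ((d - 4).choose (c - 4) : ℝ) * ((∑ j, y j) ^ 4 - 6 * (∑ j, y j ^ 2) * (∑ j, y j) ^ 2
            + 8 * (∑ j, y j ^ 3) * (∑ j, y j) + 3 * (∑ j, y j ^ 2) ^ 2 - 6 * (∑ j, y j ^ 4)) := by
  set NN : ℕ → ℝ := fun k => ((d - k).choose (c - k) : ℝ) with hNN
  rw [expand_quartic hc y]
  have h4 : ∀ j1 j2 j3 : Fin d,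
      ∑ j4, (y j1 * y j2 * y j3 * y j4) *
          NN ((insert j4 (insert j3 (insert j2 ({j1} : Finset (Fin d))))).card)
        = y j1 * (y j2 * (y j3 * phi3 y NN (insert j3 (insert j2 ({j1} : Finset (Fin d)))))) := by
    intro j1 j2 j3
    rw [← L4 y NN (insert j3 (insert j2 ({j1} : Finset (Fin d)))), Finset.mul_sum,
      Finset.mul_sum, Finset.mul_sum]
    exact Finset.sum_congr rfl fun j4 _ => by ring
  have h3 : ∀ j1 j2 : Fin d,
      ∑ j3, y j1 * (y j2 * (y j3 * phi3 y NN (insert j3 (insert j2 ({j1} : Finset (Fin d))))))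
        = y j1 * (y j2 * phi2 y NN (insert j2 ({j1} : Finset (Fin d)))) := by
    intro j1 j2
    rw [← L3 y NN (insert j2 ({j1} : Finset (Fin d))), Finset.mul_sum, Finset.mul_sum]
  have h2 : ∀ j1 : Fin d,
      ∑ j2, y j1 * (y j2 * phi2 y NN (insert j2 ({j1} : Finset (Fin d))))
        = y j1 * phi1 y NN ({j1} : Finset (Fin d)) := by
    intro j1
    rw [← L2 y NN ({j1} : Finset (Fin d)), Finset.mul_sum]
  calc ∑ j1, ∑ j2, ∑ j3, ∑ j4, (y j1 * y j2 * y j3 * y j4) *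
          NN ((insert j4 (insert j3 (insert j2 ({j1} : Finset (Fin d))))).card)
      = ∑ j1, ∑ j2, ∑ j3, y j1 * (y j2 * (y j3
          * phi3 y NN (insert j3 (insert j2 ({j1} : Finset (Fin d)))))) := by
        exact Finset.sum_congr rfl fun j1 _ => Finset.sum_congr rfl fun j2 _ =>
          Finset.sum_congr rfl fun j3 _ => h4 j1 j2 j3
    _ = ∑ j1, ∑ j2, y j1 * (y j2 * phi2 y NN (insert j2 ({j1} : Finset (Fin d)))) := by
        exact Finset.sum_congr rfl fun j1 _ => Finset.sum_congr rfl fun j2 _ => h3 j1 j2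
    _ = ∑ j1, y j1 * phi1 y NN ({j1} : Finset (Fin d)) := by
        exact Finset.sum_congr rfl fun j1 _ => h2 j1
    _ = _ := L1 y NN

private lemma le_of_sq_le' (A B : ℝ) (h : A^2 ≤ B^2) (hB : 0 ≤ B) : A ≤ B := by
  nlinarith [sq_nonneg (A - B), sq_nonneg (A + B)]

private lemma amgm31 (M v : ℝ) (h0 : 0 ≤ v) (h1 : v ≤ M) : (M - v)^3 * v ≤ 27/256 * M^4 := by
  nlinarith [sq_nonneg ((4*v - M) * (4*v - 5*M)), sq_nonneg ((4*v - M) * M)]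

private lemma amgm11 (M v : ℝ) : (M - v) * v ≤ M^2 / 4 := by
  nlinarith [sq_nonneg (M - 2*v)]

private lemma gamma_nonneg (t : ℝ) (h : 0 ≤ t) : 0 ≤ t - 28/5*t^2 + 12*t^3 := by
  nlinarith [mul_nonneg h (sq_nonneg (t - 7/30))]

private lemma poly_final (t : ℝ) (h0 : 0 < t) (h : t ≤ 1/2) :
    (t - 28/5*t^2 + 12*t^3) + 3*t^2 + 31/20 * t + 25/12 * t^2 * (1 - t)
      + 100/81 * t^2 * (1 - t)^2 ≤ 5 * t := by
  have h2 : t^2 ≤ t * (1/2) := by nlinarith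
  have h3 : t^3 ≤ t * (1/4) := by nlinarith
  have h4 : t^4 ≤ t * (1/8) := by nlinarith [sq_nonneg t]
  nlinarith

set_option maxHeartbeats 1000000 in
private lemma analytic_bound
    (t p1 p2 p3 p4 S1 S2 S3 S4 M v K W : ℝ)
    (ht0 : 0 < t) (ht : t ≤ 1/2)
    (hp1 : p1 = t)
    (hp2l : 4/5 * t^2 ≤ p2) (hp2u : p2 ≤ t^2)
    (hp3u : p3 ≤ t * p2) (hp30 : 0 ≤ p3)
    (hp4u : p4 ≤ t * p3) (hp40 : 0 ≤ p4)
    (hS2v : S2 = M - v) (hv0 : 0 ≤ v) (hS20 : 0 ≤ S2)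
    (hS40 : 0 ≤ S4) (hS4 : S4 ≤ S2^2) (hS3 : S3^2 ≤ S2 * S4)
    (hS1K : S1^2 = K * v) (hK0 : 0 ≤ K) (hKt : K * t ≤ 25/18 * (1 - t))
    (hS1W : S1^2 ≤ W * M) (hW0 : 0 ≤ W) (hWt : W * t ≤ 10/9 * (1 - t)) :
    p1 * S4 + p2 * (4 * (S3 * S1 - S4) + 3 * (S2^2 - S4))
      + 6 * p3 * (S2 * S1^2 - S2^2 - 2 * S3 * S1 + 2 * S4)
      + p4 * (S1^4 - 6 * S2 * S1^2 + 8 * S3 * S1 + 3 * S2^2 - 6 * S4)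
    ≤ 5 * t * M^2 := by
  have hM0 : 0 ≤ M := by linarith
  have hvM : v ≤ M := by linarith
  have ht2 : t^2 ≤ 1/4 := by
    have h := mul_le_mul ht ht ht0.le (by norm_num : (0:ℝ) ≤ 1/2)
    have h2 : t^2 = t*t := by ring
    linarith
  have hp20 : 0 ≤ p2 := by linarith [sq_nonneg t]
  have hp3t : p3 ≤ t^3 := by
    have h1 : t * p2 ≤ t * t^2 := mul_le_mul_of_nonneg_left hp2u ht0.le
    have h2 : t * t^2 = t^3 := by ring
    linarith
  have hp4t : p4 ≤ t^4 := by
    have h1 : t * p3 ≤ t * t^3 := mul_le_mul_of_nonneg_left hp3t ht0.le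
    have h2 : t * t^3 = t^4 := by ring
    linarith
  have hp4p3 : p4 ≤ p3 := by
    have h1 : t * p3 ≤ (1/2) * p3 := mul_le_mul_of_nonneg_right ht hp30
    linarith
  have hS2M : S2 ≤ M := by linarith
  have hS22 : S2^2 ≤ M^2 := by
    have := pow_le_pow_left₀ hS20 hS2M 2
    linarith
  have hS4M : S4 ≤ M^2 := le_trans hS4 hS22
  have hS10 : 0 ≤ S1^2 := sq_nonneg S1
  have ht3half : t^3 ≤ t^2 * (1/2) := by
    have : t^2 * t ≤ t^2 * (1/2) := mul_le_mul_of_nonneg_left ht (sq_nonneg t)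
    linarith [this, (by ring : t^2 * t = t^3)]
  have ht4quarter : t^4 ≤ t^2 * (1/4) := by
    have : t^2 * t^2 ≤ t^2 * (1/4) := mul_le_mul_of_nonneg_left ht2 (sq_nonneg t)
    linarith [this, (by ring : t^2 * t^2 = t^4)]
  -- Term (i)
  have hγ0 : 0 ≤ t - 28/5*t^2 + 12*t^3 := gamma_nonneg t ht0.le
  have hc4 : p1 - 7*p2 + 12*p3 - 6*p4 ≤ t - 28/5*t^2 + 12*t^3 := by linarith
  have hterm1 : (p1 - 7*p2 + 12*p3 - 6*p4) * S4 ≤ (t - 28/5*t^2 + 12*t^3) * M^2 := by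
    have h1 := mul_le_mul_of_nonneg_right hc4 hS40
    have h2 := mul_le_mul_of_nonneg_left hS4M hγ0
    linarith
  -- Term (ii)
  have hterm2 : (3*p2 - 6*p3 + 3*p4) * S2^2 ≤ 3*t^2 * M^2 := by
    have hC2 : 3*p2 - 6*p3 + 3*p4 ≤ 3*t^2 := by linarith
    have h1 := mul_le_mul_of_nonneg_right hC2 (sq_nonneg S2)
    have h2 : (3*t^2) * S2^2 ≤ (3*t^2) * M^2 :=
      mul_le_mul_of_nonneg_left hS22 (by positivity)
    linarith
  -- Term (iii)
  have hX2t : (S3*S1)^2 * t ≤ 75/512 * (1 - t) * M^4 := by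
    have h1 : (S3*S1)^2 ≤ (S2 * S4) * S1^2 := by
      have h := mul_le_mul_of_nonneg_right hS3 hS10
      calc (S3*S1)^2 = S3^2 * S1^2 := by ring
        _ ≤ (S2 * S4) * S1^2 := h
    have h2 : (S2 * S4) * S1^2 ≤ S2^3 * S1^2 := by
      have h : S2 * S4 ≤ S2 * S2^2 := mul_le_mul_of_nonneg_left hS4 hS20
      have := mul_le_mul_of_nonneg_right h hS10
      calc (S2 * S4) * S1^2 ≤ (S2 * S2^2) * S1^2 := this
        _ = S2^3 * S1^2 := by ring
    have h3 : S2^3 * S1^2 * t = S2^3 * v * (K * t) := by rw [hS1K]; ring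
    have hS2v3 : 0 ≤ S2^3 * v := by positivity
    have h4 : S2^3 * v * (K * t) ≤ S2^3 * v * (25/18 * (1 - t)) :=
      mul_le_mul_of_nonneg_left hKt hS2v3
    have h5 : S2^3 * v ≤ 27/256 * M^4 := by
      rw [hS2v]; exact amgm31 M v hv0 hvM
    have h6 : (0:ℝ) ≤ 25/18 * (1 - t) := by linarith
    have h7 : S2^3 * v * (25/18 * (1 - t)) ≤ 27/256 * M^4 * (25/18 * (1 - t)) :=
      mul_le_mul_of_nonneg_right h5 h6
    have h8 : (S3*S1)^2 * t ≤ S2^3 * S1^2 * t :=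
      mul_le_mul_of_nonneg_right (le_trans h1 h2) ht0.le
    calc (S3*S1)^2 * t ≤ S2^3 * S1^2 * t := h8
      _ = S2^3 * v * (K * t) := h3
      _ ≤ S2^3 * v * (25/18 * (1 - t)) := h4
      _ ≤ 27/256 * M^4 * (25/18 * (1 - t)) := h7
      _ = 75/512 * (1 - t) * M^4 := by ring
  have hterm3 : (4*p2 - 12*p3 + 8*p4) * (S3*S1) ≤ 31/20 * t * M^2 := by
    have hC3u : 4*p2 - 12*p3 + 8*p4 ≤ 6*t^2 := by linarith
    have hC3l : -(6*t^2) ≤ 4*p2 - 12*p3 + 8*p4 := by linarith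
    have hc3sq : (4*p2 - 12*p3 + 8*p4)^2 ≤ (6*t^2)^2 := sq_le_sq' hC3l hC3u
    have hsq : ((4*p2 - 12*p3 + 8*p4) * (S3*S1))^2 ≤ (31/20 * t * M^2)^2 := by
      have h1 : ((4*p2 - 12*p3 + 8*p4) * (S3*S1))^2 ≤ 36*t^4 * (S3*S1)^2 := by
        have := mul_le_mul_of_nonneg_right hc3sq (sq_nonneg (S3*S1))
        calc ((4*p2 - 12*p3 + 8*p4) * (S3*S1))^2
            = (4*p2 - 12*p3 + 8*p4)^2 * (S3*S1)^2 := by ring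
          _ ≤ (6*t^2)^2 * (S3*S1)^2 := this
          _ = 36*t^4 * (S3*S1)^2 := by ring
      have h2 : 36*t^4 * (S3*S1)^2 = 36*t^3 * ((S3*S1)^2 * t) := by ring
      have h3 : 36*t^3 * ((S3*S1)^2 * t) ≤ 36*t^3 * (75/512 * (1 - t) * M^4) :=
        mul_le_mul_of_nonneg_left hX2t (by positivity)
      have htt : t^3 * (1 - t) ≤ t^2 * (1/4) := by
        have htq : t * (1 - t) ≤ 1/4 := by linarith [sq_nonneg (1 - 2*t)]
        have := mul_le_mul_of_nonneg_left htq (sq_nonneg t)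
        linarith [this, (by ring : t^2 * (t * (1 - t)) = t^3 * (1 - t))]
      have h4 : 36*t^3 * (75/512 * (1 - t) * M^4) ≤ 675/512 * (t^2 * M^4) := by
        have := mul_le_mul_of_nonneg_right htt (by positivity : (0:ℝ) ≤ M^4)
        calc 36*t^3 * (75/512 * (1 - t) * M^4) = (2700/512) * (t^3 * (1 - t) * M^4) := by ring
          _ ≤ (2700/512) * (t^2 * (1/4) * M^4) := by
              have h' : t^3 * (1 - t) * M^4 ≤ t^2 * (1/4) * M^4 := this
              linarith
          _ = 675/512 * (t^2 * M^4) := by ring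
      have h5 : (675/512) * (t^2 * M^4) ≤ (961/400) * (t^2 * M^4) := by
        have : (0:ℝ) ≤ t^2 * M^4 := by positivity
        linarith
      calc ((4*p2 - 12*p3 + 8*p4) * (S3*S1))^2 ≤ 36*t^4 * (S3*S1)^2 := h1
        _ = 36*t^3 * ((S3*S1)^2 * t) := h2
        _ ≤ 36*t^3 * (75/512 * (1 - t) * M^4) := h3
        _ ≤ 675/512 * (t^2 * M^4) := h4
        _ ≤ 961/400 * (t^2 * M^4) := h5
        _ = (31/20 * t * M^2)^2 := by ring
    exact le_of_sq_le' _ _ hsq (by positivity)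
  -- Term (iv)
  have hterm4 : (6*p3 - 6*p4) * (S2 * S1^2) ≤ 25/12 * t^2 * (1 - t) * M^2 := by
    have hSS0 : 0 ≤ S2 * S1^2 := mul_nonneg hS20 hS10
    have hC22 : 6*p3 - 6*p4 ≤ 6*t^3 := by linarith
    have h1 : (6*p3 - 6*p4) * (S2 * S1^2) ≤ 6*t^3 * (S2 * S1^2) :=
      mul_le_mul_of_nonneg_right hC22 hSS0
    have h2 : S2 * S1^2 * t = (M - v) * v * (K * t) := by rw [hS1K, hS2v]; ring
    have hmv0 : 0 ≤ (M - v) * v := by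
      rw [← hS2v]; exact mul_nonneg hS20 hv0
    have h3 : (M - v) * v * (K * t) ≤ (M - v) * v * (25/18 * (1 - t)) :=
      mul_le_mul_of_nonneg_left hKt hmv0
    have h4 : (M - v) * v * (25/18 * (1 - t)) ≤ M^2/4 * (25/18 * (1 - t)) :=
      mul_le_mul_of_nonneg_right (amgm11 M v) (by linarith)
    have h5 : S2 * S1^2 * t ≤ 25/72 * (1 - t) * M^2 := by
      calc S2 * S1^2 * t = (M - v) * v * (K * t) := h2
        _ ≤ (M - v) * v * (25/18 * (1 - t)) := h3
        _ ≤ M^2/4 * (25/18 * (1 - t)) := h4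
        _ = 25/72 * (1 - t) * M^2 := by ring
    have h7 : 6*t^2 * (S2 * S1^2 * t) ≤ 6*t^2 * (25/72 * (1 - t) * M^2) :=
      mul_le_mul_of_nonneg_left h5 (by positivity)
    calc (6*p3 - 6*p4) * (S2 * S1^2) ≤ 6*t^3 * (S2 * S1^2) := h1
      _ = 6*t^2 * (S2 * S1^2 * t) := by ring
      _ ≤ 6*t^2 * (25/72 * (1 - t) * M^2) := h7
      _ = 25/12 * t^2 * (1 - t) * M^2 := by ring
  -- Term (v)
  have hterm5 : p4 * S1^4 ≤ 100/81 * t^2 * (1 - t)^2 * M^2 := by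
    have hWM0 : 0 ≤ W * M := mul_nonneg hW0 hM0
    have h1 : S1^4 ≤ W^2 * M^2 := by
      have := mul_le_mul hS1W hS1W hS10 hWM0
      calc S1^4 = S1^2 * S1^2 := by ring
          _ ≤ (W*M) * (W*M) := this
          _ = W^2 * M^2 := by ring
    have hWt0 : 0 ≤ W * t := mul_nonneg hW0 ht0.le
    have h2 : W^2 * t^2 ≤ 100/81 * (1 - t)^2 := by
      have := mul_le_mul hWt hWt hWt0 (by linarith : (0:ℝ) ≤ 10/9 * (1 - t))
      calc W^2 * t^2 = (W*t) * (W*t) := by ring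
        _ ≤ (10/9 * (1 - t)) * (10/9 * (1 - t)) := this
        _ = 100/81 * (1 - t)^2 := by ring
    have hp4S : p4 * S1^4 ≤ t^4 * (W^2 * M^2) := by
      have hS14 : (0:ℝ) ≤ S1^4 := by positivity
      have ha := mul_le_mul_of_nonneg_right hp4t hS14
      have hb := mul_le_mul_of_nonneg_left h1 (by positivity : (0:ℝ) ≤ t^4)
      linarith
    have h4 : (W^2 * t^2) * (t^2 * M^2) ≤ (100/81 * (1 - t)^2) * (t^2 * M^2) :=
      mul_le_mul_of_nonneg_right h2 (by positivity)
    calc p4 * S1^4 ≤ t^4 * (W^2 * M^2) := hp4S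
      _ = (W^2 * t^2) * (t^2 * M^2) := by ring
      _ ≤ (100/81 * (1 - t)^2) * (t^2 * M^2) := h4
      _ = 100/81 * t^2 * (1 - t)^2 * M^2 := by ring
  -- assemble
  have hgroup : p1 * S4 + p2 * (4 * (S3 * S1 - S4) + 3 * (S2^2 - S4))
      + 6 * p3 * (S2 * S1^2 - S2^2 - 2 * S3 * S1 + 2 * S4)
      + p4 * (S1^4 - 6 * S2 * S1^2 + 8 * S3 * S1 + 3 * S2^2 - 6 * S4)
      = (p1 - 7*p2 + 12*p3 - 6*p4) * S4 + (3*p2 - 6*p3 + 3*p4) * S2^2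
        + (4*p2 - 12*p3 + 8*p4) * (S3*S1) + (6*p3 - 6*p4) * (S2 * S1^2) + p4 * S1^4 := by
    ring
  have hpoly := poly_final t ht0 ht
  have hfin : ((t - 28/5*t^2 + 12*t^3) + 3*t^2 + 31/20 * t + 25/12 * t^2 * (1 - t)
      + 100/81 * t^2 * (1 - t)^2) * M^2 ≤ (5 * t) * M^2 :=
    mul_le_mul_of_nonneg_right hpoly (sq_nonneg M)
  rw [hgroup]
  linarith [hterm1, hterm2, hterm3, hterm4, hterm5, hfin]

private lemma p_bounds (c d C0 C1 C2 C3 C4 : ℝ)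
    (hc : 5 ≤ c) (hd : 2*c ≤ d)
    (h0 : 0 < C0) (h10 : 0 ≤ C1) (h20 : 0 ≤ C2) (h30 : 0 ≤ C3) (h40 : 0 ≤ C4)
    (e1 : d * C1 = c * C0) (e2 : (d-1) * C2 = (c-1) * C1)
    (e3 : (d-2) * C3 = (c-2) * C2) (e4 : (d-3) * C4 = (c-3) * C3) :
    C1/C0 = c/d ∧ 4/5*(c/d)^2 ≤ C2/C0 ∧ C2/C0 ≤ (c/d)^2
      ∧ C3/C0 ≤ (c/d)*(C2/C0) ∧ C4/C0 ≤ (c/d)*(C3/C0) := by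
  have hd0 : (0:ℝ) < d := by linarith
  have hc0 : (0:ℝ) < c := by linarith
  have hcd : c ≤ d := by linarith
  have hd1 : (0:ℝ) < d - 1 := by linarith
  have hd2 : (0:ℝ) < d - 2 := by linarith
  have hd3 : (0:ℝ) < d - 3 := by linarith
  have I2 : d*(d-1)*C2 = c*(c-1)*C0 := by linear_combination d * e2 + (c-1) * e1
  constructor
  · rw [div_eq_div_iff h0.ne' hd0.ne']
    linarith
  refine ⟨?_, ?_, ?_, ?_⟩
  · -- 4/5 (c/d)^2 ≤ C2/C0
    rw [div_pow, ← mul_div_assoc, div_le_div_iff₀ (by positivity) h0]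
    -- 4/5*c^2 * C0 ≤ C2 * d^2
    have h1 : d*(d-1)*C2 ≤ d*d*C2 := by linarith [mul_nonneg hd0.le h20]
    have h2 : 4/5*c^2 ≤ c*(c-1) := by
      linarith [mul_nonneg hc0.le (by linarith : (0:ℝ) ≤ c - 5)]
    have h3 : (4/5*c^2) * C0 ≤ (c*(c-1)) * C0 := mul_le_mul_of_nonneg_right h2 h0.le
    linarith [h1, h3, I2]
  · -- C2/C0 ≤ (c/d)^2
    rw [div_pow, div_le_div_iff₀ h0 (by positivity)]
    -- C2 * d^2 ≤ c^2 * C0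
    have hC21 : C2 ≤ C1 := by
      have ha : (c-1)*C1 ≤ (d-1)*C1 := mul_le_mul_of_nonneg_right (by linarith) h10
      have hb : (d-1)*C2 ≤ (d-1)*C1 := by linarith
      exact le_of_mul_le_mul_left hb hd1
    have h1 : d*C2 ≤ d*C1 := mul_le_mul_of_nonneg_left hC21 hd0.le
    linarith [I2, h1, e1]
  · -- C3/C0 ≤ (c/d) * (C2/C0)
    rw [div_mul_div_comm, div_le_div_iff₀ h0 (by positivity)]
    -- C3 * (d*C0) ≤ c*C2*C0
    have hdC3 : d*C3 ≤ c*C2 := by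
      have hC32 : C3 ≤ C2 := by
        have ha : (c-2)*C2 ≤ (d-2)*C2 := mul_le_mul_of_nonneg_right (by linarith) h20
        have hb : (d-2)*C3 ≤ (d-2)*C2 := by linarith
        exact le_of_mul_le_mul_left hb hd2
      linarith [e3, hC32]
    linarith [mul_le_mul_of_nonneg_right hdC3 h0.le]
  · rw [div_mul_div_comm, div_le_div_iff₀ h0 (by positivity)]
    have hdC4 : d*C4 ≤ c*C3 := by
      have hC43 : C4 ≤ C3 := by
        have ha : (c-3)*C3 ≤ (d-3)*C3 := mul_le_mul_of_nonneg_right (by linarith) h30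
        have hb : (d-3)*C4 ≤ (d-3)*C3 := by linarith
        exact le_of_mul_le_mul_left hb hd3
      linarith [e4, hC43]
    linarith [mul_le_mul_of_nonneg_right hdC4 h0.le]

set_option maxHeartbeats 1000000 in
/-- With `5 ≤ c ≤ d/2`, `q = (1/d)(1 + √((d-c)/(c(d-1))))`,
`y i = x i - q s_x`, and `η = ∑_{j∈J} y j` for a uniformly random `c`-subset `J`,
`E[η⁴] ≤ (5c/d) ‖x‖⁴`. -/
theorem fixed_sparsity_fourth_moment_bound
    {d c : ℕ} (hc : 5 ≤ c) (hcd : 2 * c ≤ d)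
    (x : Fin d → ℝ) :
    let sx : ℝ := ∑ j, x j
    let q : ℝ := (1 / d) * (1 + Real.sqrt ((d - c) / (c * (d - 1))))
    let y : Fin d → ℝ := fun i => x i - q * sx
    (1 / (d.choose c : ℝ)) *
        ∑ J ∈ Finset.powersetCard c (Finset.univ : Finset (Fin d)), (∑ j ∈ J, y j) ^ 4
      ≤ (5 * c / d : ℝ) * (∑ j, (x j) ^ 2) ^ 2 := by
  intro sx q y
  have hq : q = (1 / (d:ℝ)) * (1 + Real.sqrt (((d:ℝ) - (c:ℝ)) / ((c:ℝ) * ((d:ℝ) - 1)))) := rfl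
  have hsx : sx = ∑ j, x j := rfl
  have hy : ∀ i, y i = x i - q * sx := fun i => rfl
  have hc4 : 4 ≤ c := by omega
  have hd10 : (10:ℕ) ≤ d := by omega
  have hdR : (10:ℝ) ≤ (d:ℝ) := by exact_mod_cast hd10
  have hcR : (5:ℝ) ≤ (c:ℝ) := by exact_mod_cast hc
  have hcdR : 2*(c:ℝ) ≤ (d:ℝ) := by exact_mod_cast hcd
  have hd0 : (0:ℝ) < (d:ℝ) := by linarith
  have hc0 : (0:ℝ) < (c:ℝ) := by linarith
  have hd1 : (0:ℝ) < (d:ℝ) - 1 := by linarith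
  have hcdR' : (c:ℝ) ≤ (d:ℝ) := by linarith
  -- w and r
  set w : ℝ := ((d:ℝ) - (c:ℝ)) / ((c:ℝ) * ((d:ℝ) - 1)) with hwdef
  have hw0 : 0 ≤ w := div_nonneg (by linarith) (by positivity)
  have hw15 : w ≤ 1/5 := by
    rw [hwdef, div_le_iff₀ (by positivity)]
    have h5d : 5*(d:ℝ) ≤ (c:ℝ)*(d:ℝ) := mul_le_mul_of_nonneg_right hcR hd0.le
    linarith
  set r : ℝ := Real.sqrt w with hrdef
  have hr0 : 0 ≤ r := Real.sqrt_nonneg w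
  have hr2 : r^2 = w := Real.sq_sqrt hw0
  have hqval : q = (1 + r)/(d:ℝ) := by rw [hq]; ring
  -- moments
  set M : ℝ := ∑ j, x j^2 with hM
  set u : ℝ := sx^2 with hu
  set v : ℝ := ((1 - w)/(d:ℝ)) * u with hv
  have hS1 : (∑ j, y j) = -(r * sx) := by
    have h1 : (∑ j, y j) = sx - (d:ℝ)*(q*sx) := by
      calc (∑ j, y j) = ∑ j, (x j - q * sx) := Finset.sum_congr rfl (fun j _ => hy j)
        _ = (∑ j, x j) - (∑ _j : Fin d, q * sx) := Finset.sum_sub_distrib _ _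
        _ = sx - (d:ℝ)*(q*sx) := by
            rw [Finset.sum_const, Finset.card_univ, Fintype.card_fin, nsmul_eq_mul, ← hsx]
    rw [h1, hqval]
    field_simp
    ring
  have h2q : 2*q - (d:ℝ)*q^2 = (1 - w)/(d:ℝ) := by
    rw [hqval, ← hr2]
    field_simp
    ring
  have hS2 : (∑ j, y j^2) = M - v := by
    have hexp : ∀ j : Fin d, y j^2 = x j^2 - (2*q*sx)*x j + q^2*sx^2 := fun j => by
      rw [hy]; ring
    calc (∑ j, y j^2) = ∑ j, (x j^2 - (2*q*sx)*x j + q^2*sx^2) :=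
          Finset.sum_congr rfl (fun j _ => hexp j)
      _ = (∑ j, x j^2) - (2*q*sx)*(∑ j, x j) + (d:ℝ)*(q^2*sx^2) := by
          rw [Finset.sum_add_distrib, Finset.sum_sub_distrib, ← Finset.mul_sum,
            Finset.sum_const, Finset.card_univ, Fintype.card_fin, nsmul_eq_mul]
      _ = M - (2*q - (d:ℝ)*q^2) * u := by rw [← hsx, hM, hu]; ring
      _ = M - v := by rw [h2q, hv]
  have hS20 : 0 ≤ ∑ j, y j^2 := Finset.sum_nonneg (fun j _ => sq_nonneg (y j))
  have hS40 : 0 ≤ ∑ j, y j^4 := Finset.sum_nonneg (fun j _ => by positivity)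
  have hS4 : (∑ j, y j^4) ≤ (∑ j, y j^2)^2 := by
    have h1 : ∀ j : Fin d, y j^4 ≤ y j^2 * ∑ i, y i^2 := fun j => by
      have hle := Finset.single_le_sum (f := fun i => y i^2)
        (fun i _ => sq_nonneg (y i)) (Finset.mem_univ j)
      have := mul_le_mul_of_nonneg_left hle (sq_nonneg (y j))
      calc y j^4 = y j^2 * y j^2 := by ring
        _ ≤ y j^2 * ∑ i, y i^2 := this
    calc (∑ j, y j^4) ≤ ∑ j, y j^2 * (∑ i, y i^2) := Finset.sum_le_sum (fun j _ => h1 j)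
      _ = (∑ j, y j^2)^2 := by rw [← Finset.sum_mul]; ring
  have hS3 : (∑ j, y j^3)^2 ≤ (∑ j, y j^2) * (∑ j, y j^4) := by
    have h := Finset.sum_mul_sq_le_sq_mul_sq Finset.univ (fun j => y j) (fun j => y j^2)
    have h1 : (∑ j, y j * y j^2) = ∑ j, y j^3 := Finset.sum_congr rfl (fun j _ => by ring)
    have h2 : (∑ j, (y j)^2) = ∑ j, y j^2 := rfl
    have h3 : (∑ j, (y j^2)^2) = ∑ j, y j^4 := Finset.sum_congr rfl (fun j _ => by ring)
    rw [h1, h3] at h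
    exact h
  have huM : u ≤ (d:ℝ) * M := by
    have h := sq_sum_le_card_mul_sum_sq (s := (Finset.univ : Finset (Fin d))) (f := x)
    rw [Finset.card_univ, Fintype.card_fin] at h
    rw [hu, hsx, hM]
    exact_mod_cast h
  have hv0 : 0 ≤ v := by
    rw [hv]
    have : 0 ≤ (1 - w)/(d:ℝ) := div_nonneg (by linarith) hd0.le
    exact mul_nonneg this (by positivity)
  -- K and W
  set W : ℝ := w * (d:ℝ) with hW
  set K : ℝ := W / (1 - w) with hK
  have h1w : (0:ℝ) < 1 - w := by linarith
  have hW0 : 0 ≤ W := mul_nonneg hw0 hd0.le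
  have hK0 : 0 ≤ K := div_nonneg hW0 h1w.le
  have hS1sq : (∑ j, y j)^2 = w * u := by
    rw [hS1, hu]
    calc (-(r*sx))^2 = r^2 * sx^2 := by ring
      _ = w * sx^2 := by rw [hr2]
  have hS1K : (∑ j, y j)^2 = K * v := by
    rw [hS1sq, hK, hW, hv]
    field_simp
  have hS1W : (∑ j, y j)^2 ≤ W * M := by
    rw [hS1sq, hW]
    calc w * u ≤ w * ((d:ℝ)*M) := mul_le_mul_of_nonneg_left huM hw0
      _ = w * (d:ℝ) * M := by ring
  -- t facts
  set t : ℝ := (c:ℝ)/(d:ℝ) with ht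
  have ht0 : 0 < t := div_pos hc0 hd0
  have ht12 : t ≤ 1/2 := by
    rw [ht, div_le_iff₀ hd0]
    linarith
  have hwc : w * (c:ℝ) = ((d:ℝ) - c)/((d:ℝ) - 1) := by
    rw [hwdef]
    field_simp
  have h1t : 1 - t = ((d:ℝ) - c)/(d:ℝ) := by
    rw [ht]
    field_simp
  have hfrac : ((d:ℝ) - c)/((d:ℝ) - 1) ≤ 10/9 * (1 - t) := by
    rw [h1t]
    have h9 : 10/9*(((d:ℝ)-c)/d) = (10*((d:ℝ)-c))/(9*d) := by ring
    rw [h9, div_le_div_iff₀ hd1 (by positivity)]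
    linarith [mul_nonneg (by linarith : (0:ℝ) ≤ (d:ℝ)-c) (by linarith : (0:ℝ) ≤ (d:ℝ)-10)]
  have hWt : W * t ≤ 10/9 * (1 - t) := by
    have hWtc : W * t = w * (c:ℝ) := by
      rw [hW, ht]
      field_simp
    rw [hWtc, hwc]
    exact hfrac
  have hKt : K * t ≤ 25/18 * (1 - t) := by
    have hKtv : K * t = (w * (c:ℝ))/(1 - w) := by
      rw [hK, hW, ht]
      field_simp
    rw [hKtv]
    have hwc0 : 0 ≤ w * (c:ℝ) := mul_nonneg hw0 hc0.le
    have h45 : (4:ℝ)/5 ≤ 1 - w := by linarith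
    have hstep : (w * (c:ℝ))/(1 - w) ≤ (w * (c:ℝ))/(4/5) :=
      div_le_div_of_nonneg_left hwc0 (by norm_num) h45
    have hstep2 : (w * (c:ℝ))/(4/5) = 5/4 * (w * (c:ℝ)) := by ring
    have hstep3 : w * (c:ℝ) ≤ 10/9 * (1 - t) := by rw [hwc]; exact hfrac
    calc (w * (c:ℝ))/(1 - w) ≤ (w * (c:ℝ))/(4/5) := hstep
      _ = 5/4 * (w * (c:ℝ)) := hstep2
      _ ≤ 5/4 * (10/9 * (1 - t)) := by linarith
      _ = 25/18 * (1 - t) := by ring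
  -- choose identities
  have hid : ∀ k : ℕ, k + 1 ≤ c → k + 1 ≤ d →
      ((d:ℝ) - k) * ((d - (k+1)).choose (c - (k+1)) : ℝ)
        = ((c:ℝ) - k) * ((d - k).choose (c - k) : ℝ) := by
    intro k hkc hkd
    have h := Nat.add_one_mul_choose_eq (d - (k+1)) (c - (k+1))
    have h1 : d - (k+1) + 1 = d - k := by omega
    have h2 : c - (k+1) + 1 = c - k := by omega
    rw [h1, h2] at h
    have hcast := congrArg (fun n : ℕ => (n : ℝ)) h
    push_cast at hcast
    have hdk : ((d - k : ℕ) : ℝ) = (d:ℝ) - k := by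
      have : k ≤ d := by omega
      push_cast [this]; ring
    have hck : ((c - k : ℕ) : ℝ) = (c:ℝ) - k := by
      have : k ≤ c := by omega
      push_cast [this]; ring
    rw [hdk, hck] at hcast
    linarith
  set C0 : ℝ := (d.choose c : ℝ) with hC0
  set C1 : ℝ := ((d-1).choose (c-1) : ℝ) with hC1
  set C2 : ℝ := ((d-2).choose (c-2) : ℝ) with hC2
  set C3 : ℝ := ((d-3).choose (c-3) : ℝ) with hC3
  set C4 : ℝ := ((d-4).choose (c-4) : ℝ) with hC4
  have hC0pos : 0 < C0 := by
    rw [hC0]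
    exact_mod_cast Nat.choose_pos (by omega : c ≤ d)
  have hC10 : 0 ≤ C1 := by rw [hC1]; positivity
  have hC20 : 0 ≤ C2 := by rw [hC2]; positivity
  have hC30 : 0 ≤ C3 := by rw [hC3]; positivity
  have hC40 : 0 ≤ C4 := by rw [hC4]; positivity
  have e1 : (d:ℝ) * C1 = (c:ℝ) * C0 := by
    have := hid 0 (by omega) (by omega)
    simpa using this
  have e2 : ((d:ℝ) - 1) * C2 = ((c:ℝ) - 1) * C1 := by
    have := hid 1 (by omega) (by omega)
    simpa using this
  have e3 : ((d:ℝ) - 2) * C3 = ((c:ℝ) - 2) * C2 := by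
    have := hid 2 (by omega) (by omega)
    simpa using this
  have e4 : ((d:ℝ) - 3) * C4 = ((c:ℝ) - 3) * C3 := by
    have := hid 3 (by omega) (by omega)
    simpa using this
  obtain ⟨hp1, hp2l, hp2u, hp3u, hp4u⟩ :=
    p_bounds (c:ℝ) (d:ℝ) C0 C1 C2 C3 C4 hcR hcdR hC0pos hC10 hC20 hC30 hC40 e1 e2 e3 e4
  have hp30 : 0 ≤ C3/C0 := div_nonneg hC30 hC0pos.le
  have hp40 : 0 ≤ C4/C0 := div_nonneg hC40 hC0pos.le
  -- apply the key identity and the analytic bound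
  rw [key_identity hc4 y]
  have hbound := analytic_bound t (C1/C0) (C2/C0) (C3/C0) (C4/C0)
    (∑ j, y j) (∑ j, y j^2) (∑ j, y j^3) (∑ j, y j^4) M v K W
    ht0 ht12 hp1 hp2l hp2u hp3u hp30 hp4u hp40
    hS2 hv0 hS20 hS40 hS4 hS3 hS1K hK0 hKt hS1W hW0 hWt
  have hrw : (1 / C0) *
      (C1 * (∑ j, y j ^ 4)
        + C2 * (4 * ((∑ j, y j ^ 3) * (∑ j, y j) - (∑ j, y j ^ 4))
            + 3 * ((∑ j, y j ^ 2) ^ 2 - (∑ j, y j ^ 4)))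
        + 6 * C3 * ((∑ j, y j ^ 2) * (∑ j, y j) ^ 2 - (∑ j, y j ^ 2) ^ 2
            - 2 * (∑ j, y j ^ 3) * (∑ j, y j) + 2 * (∑ j, y j ^ 4))
        + C4 * ((∑ j, y j) ^ 4 - 6 * (∑ j, y j ^ 2) * (∑ j, y j) ^ 2
            + 8 * (∑ j, y j ^ 3) * (∑ j, y j) + 3 * (∑ j, y j ^ 2) ^ 2 - 6 * (∑ j, y j ^ 4)))
      = (C1/C0) * (∑ j, y j ^ 4)
        + (C2/C0) * (4 * ((∑ j, y j ^ 3) * (∑ j, y j) - (∑ j, y j ^ 4))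
            + 3 * ((∑ j, y j ^ 2) ^ 2 - (∑ j, y j ^ 4)))
        + 6 * (C3/C0) * ((∑ j, y j ^ 2) * (∑ j, y j) ^ 2 - (∑ j, y j ^ 2) ^ 2
            - 2 * (∑ j, y j ^ 3) * (∑ j, y j) + 2 * (∑ j, y j ^ 4))
        + (C4/C0) * ((∑ j, y j) ^ 4 - 6 * (∑ j, y j ^ 2) * (∑ j, y j) ^ 2
            + 8 * (∑ j, y j ^ 3) * (∑ j, y j) + 3 * (∑ j, y j ^ 2) ^ 2 - 6 * (∑ j, y j ^ 4)) := by
    field_simp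
  rw [hrw]
  have hfinal : 5 * t * M^2 = (5 * (c:ℝ) / (d:ℝ)) * M^2 := by rw [ht]; ring
  calc (C1/C0) * (∑ j, y j ^ 4)
        + (C2/C0) * (4 * ((∑ j, y j ^ 3) * (∑ j, y j) - (∑ j, y j ^ 4))
            + 3 * ((∑ j, y j ^ 2) ^ 2 - (∑ j, y j ^ 4)))
        + 6 * (C3/C0) * ((∑ j, y j ^ 2) * (∑ j, y j) ^ 2 - (∑ j, y j ^ 2) ^ 2
            - 2 * (∑ j, y j ^ 3) * (∑ j, y j) + 2 * (∑ j, y j ^ 4))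
        + (C4/C0) * ((∑ j, y j) ^ 4 - 6 * (∑ j, y j ^ 2) * (∑ j, y j) ^ 2
            + 8 * (∑ j, y j ^ 3) * (∑ j, y j) + 3 * (∑ j, y j ^ 2) ^ 2 - 6 * (∑ j, y j ^ 4))
      ≤ 5 * t * M^2 := hbound
    _ = (5 * (c:ℝ) / (d:ℝ)) * M^2 := hfinal
end
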